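/- arXiv:2104.10348 — 9 statements merged into one kernel-verified Lean document; each statement's English description precedes it below -/
import Mathlib

section
/- Let W be an n×n nonnegative row-stochastic matrix (each row sums to 1) that is not doubly stochastic (some column does not sum to 1). Then the linear operator D(x) = Wx is not θ-averaged with respect to the Euclidean norm for any θ ∈ (0,1). -/
open scoped RealInnerProductSpace


/-- A nonnegative row-stochastic matrix that is not doubly stochastic is not
θ-averaged w.r.t. the Euclidean norm for any θ ∈ (0,1). -/
theorem stmt1 {n : ℕ} (W : Matrix (Fin n) (Fin n) ℝ)
    (hnonneg : ∀ i j, 0 ≤ W i j)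
    (hrow : W.mulVec (fun _ => (1 : ℝ)) = fun _ => (1 : ℝ))
    (hnotcol : ∃ j, ∑ i, W i j ≠ 1) :
    ∀ θ ∈ Set.Ioo (0 : ℝ) 1,
      ¬ ∃ S : EuclideanSpace ℝ (Fin n) → EuclideanSpace ℝ (Fin n),
        (∀ x y, ‖S x - S y‖ ≤ ‖x - y‖) ∧
        (∀ x, Matrix.toEuclideanLin W x = (1 - θ) • x + θ • S x) := by
  rintro θ ⟨hθ0, hθ1⟩ ⟨S, hS, hW⟩
  -- S 0 = 0
  have hS0 : S 0 = 0 := by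
    have h := hW 0
    simp only [map_zero, smul_zero, zero_add] at h
    have := h.symm
    rwa [smul_eq_zero, or_iff_right (ne_of_gt hθ0)] at this
  -- W is nonexpansive at 0
  have hT : ∀ x : EuclideanSpace ℝ (Fin n), ‖Matrix.toEuclideanLin W x‖ ≤ ‖x‖ := by
    intro x
    rw [hW x]
    have hSx : ‖S x‖ ≤ ‖x‖ := by
      have := hS x 0
      simpa [hS0] using this
    calc ‖(1 - θ) • x + θ • S x‖ ≤ ‖(1 - θ) • x‖ + ‖θ • S x‖ := norm_add_le _ _
      _ = (1 - θ) * ‖x‖ + θ * ‖S x‖ := by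
          rw [norm_smul, norm_smul, Real.norm_eq_abs, Real.norm_eq_abs,
            abs_of_nonneg (by linarith), abs_of_nonneg (le_of_lt hθ0)]
      _ ≤ (1 - θ) * ‖x‖ + θ * ‖x‖ := by nlinarith [norm_nonneg x]
      _ = ‖x‖ := by ring
  -- ones vector
  set e : EuclideanSpace ℝ (Fin n) := (WithLp.equiv 2 _).symm (fun _ => (1 : ℝ)) with he
  have hne : ‖e‖ = Real.sqrt n := by
    rw [EuclideanSpace.norm_eq]
    simp [he]
  -- coordinates of toEuclideanLin
  have hcoord : ∀ (x : EuclideanSpace ℝ (Fin n)) (i : Fin n),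
      (Matrix.toEuclideanLin W x) i = ∑ j, W i j * x j := by
    intro x i
    rfl
  -- key inequality
  have key : ∀ x : EuclideanSpace ℝ (Fin n),
      ∑ j, (∑ i, W i j) * x j ≤ Real.sqrt n * ‖x‖ := by
    intro x
    have h1 : (inner ℝ e (Matrix.toEuclideanLin W x) : ℝ) = ∑ j, (∑ i, W i j) * x j := by
      rw [PiLp.inner_apply]
      simp only [he, RCLike.inner_apply, starRingEnd_apply]
      simp only [star_trivial]
      conv_lhs => enter [2, i]; rw [mul_comm]
      have : ∀ i : Fin n, (WithLp.equiv 2 (Fin n → ℝ)).symm (fun _ => (1:ℝ)) i = 1 := fun _ => rfl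
      calc (∑ i, (WithLp.equiv 2 (Fin n → ℝ)).symm (fun _ => (1:ℝ)) i * (Matrix.toEuclideanLin W x) i)
          = ∑ i, ∑ j, W i j * x j := by
            refine Finset.sum_congr rfl fun i _ => ?_
            rw [this i, one_mul, hcoord]
        _ = ∑ j, ∑ i, W i j * x j := Finset.sum_comm
        _ = ∑ j, (∑ i, W i j) * x j := by
            refine Finset.sum_congr rfl fun j _ => ?_
            rw [Finset.sum_mul]
    calc ∑ j, (∑ i, W i j) * x j = (inner ℝ e (Matrix.toEuclideanLin W x) : ℝ) := h1.symm
      _ ≤ ‖e‖ * ‖Matrix.toEuclideanLin W x‖ := real_inner_le_norm _ _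
      _ ≤ ‖e‖ * ‖x‖ := by
          exact mul_le_mul_of_nonneg_left (hT x) (norm_nonneg e)
      _ = Real.sqrt n * ‖x‖ := by rw [hne]
  -- column sums
  set c : EuclideanSpace ℝ (Fin n) := (WithLp.equiv 2 _).symm (fun j => ∑ i, W i j) with hc
  have hcj : ∀ j, c j = ∑ i, W i j := fun _ => rfl
  have hnormc : ‖c‖ = Real.sqrt (∑ j, (∑ i, W i j) ^ 2) := by
    rw [EuclideanSpace.norm_eq]
    congr 1
    refine Finset.sum_congr rfl fun j _ => ?_
    rw [hcj j, Real.norm_eq_abs, sq_abs]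
  set A : ℝ := ∑ j, (∑ i, W i j) ^ 2 with hA
  have hA0 : 0 ≤ A := Finset.sum_nonneg fun j _ => sq_nonneg _
  have hkey : A ≤ Real.sqrt n * Real.sqrt A := by
    have := key c
    simp only [hcj] at this
    calc A = ∑ j, (∑ i, W i j) * (∑ i, W i j) := by
            simp [hA, sq]
      _ ≤ Real.sqrt n * ‖c‖ := by
            have h2 := key c
            calc (∑ j, (∑ i, W i j) * (∑ i, W i j))
                = ∑ j, (∑ i, W i j) * c j := by
                  refine Finset.sum_congr rfl fun j _ => by rw [hcj j]
              _ ≤ Real.sqrt n * ‖c‖ := key c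
      _ = Real.sqrt n * Real.sqrt A := by rw [hnormc]
  -- hence A ≤ n
  have hAn : A ≤ (n : ℝ) := by
    have hs : Real.sqrt A * Real.sqrt A = A := Real.mul_self_sqrt hA0
    have hsn : Real.sqrt n * Real.sqrt n = (n : ℝ) := Real.mul_self_sqrt (Nat.cast_nonneg n)
    nlinarith [Real.sqrt_nonneg A, Real.sqrt_nonneg (n : ℝ)]
  -- row sums are 1
  have hrowsum : ∀ i, ∑ j, W i j = 1 := by
    intro i
    have := congrFun hrow i
    simpa [Matrix.mulVec, dotProduct] using this
  -- total sum is n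
  have hsum : ∑ j, (∑ i, W i j) = (n : ℝ) := by
    rw [Finset.sum_comm]
    simp [hrowsum]
  -- conclude every column sum is 1
  have hzero : ∑ j, ((∑ i, W i j) - 1) ^ 2 = 0 := by
    have hexp : ∑ j, ((∑ i, W i j) - 1) ^ 2 = A - 2 * (n : ℝ) + n := by
      have : ∀ j : Fin n, ((∑ i, W i j) - 1) ^ 2
          = (∑ i, W i j) ^ 2 - 2 * (∑ i, W i j) + 1 := fun j => by ring
      rw [Finset.sum_congr rfl fun j _ => this j, Finset.sum_add_distrib,
        Finset.sum_sub_distrib, ← Finset.mul_sum, hsum]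
      simp [hA]
    have hge : 0 ≤ ∑ j, ((∑ i, W i j) - 1) ^ 2 :=
      Finset.sum_nonneg fun j _ => sq_nonneg _
    linarith [hexp ▸ (by linarith : A - 2 * (n : ℝ) + n ≤ 0)]
  obtain ⟨j, hj⟩ := hnotcol
  have := (Finset.sum_eq_zero_iff_of_nonneg fun j _ => sq_nonneg ((∑ i, W i j) - 1)).mp hzero
    j (Finset.mem_univ j)
  have : (∑ i, W i j) - 1 = 0 := by
    exact pow_eq_zero_iff (two_ne_zero) |>.mp this
  exact hj (by linarith)
end

section
/- If W is an n×n nonnegative row-stochastic matrix and the Euclidean operator norm of W equals 1, and the linear map x ↦ Wx is nonexpansive in the Euclidean norm, then Wᵀe = e, where e is the all-ones vector; i.e., W is doubly stochastic. -/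
open scoped RealInnerProductSpace

/-- If W is nonnegative, row-stochastic, its Euclidean operator norm is 1 and
x ↦ Wx is nonexpansive in the Euclidean norm, then Wᵀe = e (W is doubly
stochastic). -/
theorem stmt2 {n : ℕ} (W : Matrix (Fin n) (Fin n) ℝ)
    (hnonneg : ∀ i j, 0 ≤ W i j)
    (hrow : W.mulVec (fun _ => (1 : ℝ)) = fun _ => (1 : ℝ))
    (hnorm : ‖LinearMap.toContinuousLinearMap (Matrix.toEuclideanLin W)‖ = 1)
    (hne : ∀ x : EuclideanSpace ℝ (Fin n), ‖Matrix.toEuclideanLin W x‖ ≤ ‖x‖) :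
    W.transpose.mulVec (fun _ => (1 : ℝ)) = fun _ => (1 : ℝ) := by
  rcases Nat.eq_zero_or_pos n with hn | hn
  · subst hn; funext i; exact i.elim0
  set e : EuclideanSpace ℝ (Fin n) :=
    (WithLp.equiv 2 (Fin n → ℝ)).symm (fun _ => 1) with he
  have hWe : Matrix.toEuclideanLin W e = e := by
    rw [he, WithLp.equiv_symm_apply, Matrix.toEuclideanLin_apply_piLp_toLp, hrow]
  have hadj : Matrix.toEuclideanLin W.transpose
      = LinearMap.adjoint (Matrix.toEuclideanLin W) := by
    rw [← Matrix.toEuclideanLin_conjTranspose_eq_adjoint]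
    congr 1
  set u : EuclideanSpace ℝ (Fin n) := Matrix.toEuclideanLin W.transpose e with hu
  have hinner : ∀ y : EuclideanSpace ℝ (Fin n),
      ⟪u, y⟫ = ⟪e, Matrix.toEuclideanLin W y⟫ := fun y => by
    rw [hu, hadj]; exact LinearMap.adjoint_inner_left _ _ _
  have hepos : 0 < ‖e‖ := by
    have : e ≠ 0 := by
      intro h
      have := congrFun (congrArg (WithLp.equiv 2 (Fin n → ℝ)) h) ⟨0, hn⟩
      simp [he] at this
    exact norm_pos_iff.mpr this
  -- ‖u‖ ≤ ‖e‖
  have hule : ‖u‖ ≤ ‖e‖ := by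
    have h1 : ‖u‖ ^ 2 = ⟪u, u⟫ := (real_inner_self_eq_norm_sq u).symm
    have h2 : ⟪u, u⟫ ≤ ‖e‖ * ‖u‖ :=
      le_trans (le_trans (by rw [hinner u]) (real_inner_le_norm e _))
        (mul_le_mul_of_nonneg_left (hne u) (norm_nonneg e))
    rcases eq_or_lt_of_le (norm_nonneg u) with h | h
    · rw [← h]; exact le_of_lt hepos
    · nlinarith
  have hue : ⟪u, e⟫ = ‖e‖ * ‖e‖ := by
    rw [hinner e, hWe, real_inner_self_eq_norm_mul_norm]
  have huee : ‖u‖ = ‖e‖ := by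
    have hcs := real_inner_le_norm u e
    rw [hue] at hcs
    have : ‖e‖ ≤ ‖u‖ := by
      by_contra h
      push_neg at h
      nlinarith
    linarith
  have heq : ⟪u, e⟫ = ‖u‖ * ‖e‖ := by rw [hue, huee]
  have := inner_eq_norm_mul_iff_real.mp heq
  rw [huee] at this
  have hueq : u = e := smul_right_injective _ (ne_of_gt hepos) this
  have := congrArg (WithLp.equiv 2 (Fin n → ℝ)) hueq
  simpa [hu, he] using this
end

section
/- Let T : H → H be θ-averaged with θ ∈ (0,1) on a finite-dimensional real inner product space H, and suppose T has at least one fixed point. Then for any initialization x₀, the sequence defined by x_{k+1} = T(x_k) converges to some fixed point of T. -/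
lemma km_convex_norm_sq {H : Type*} [NormedAddCommGroup H] [InnerProductSpace ℝ H]
    (θ : ℝ) (a b : H) :
    ‖(1-θ)•a + θ•b‖^2 = (1-θ)*‖a‖^2 + θ*‖b‖^2 - θ*(1-θ)*‖a-b‖^2 := by
  have h1 := @norm_add_sq_real H _ _ ((1-θ)•a) (θ•b)
  have h2 := @norm_sub_sq_real H _ _ a b
  simp only [norm_smul, real_inner_smul_left, real_inner_smul_right, Real.norm_eq_abs,
    mul_pow, sq_abs] at h1
  nlinarith [h1, h2]

/-- Krasnosel'skii–Mann: iterates of a θ-averaged operator with a fixed point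
converge to a fixed point (finite-dimensional real inner product space). -/
theorem stmt4 {H : Type*} [NormedAddCommGroup H] [InnerProductSpace ℝ H]
    [FiniteDimensional ℝ H]
    (T : H → H) (θ : ℝ) (hθ : θ ∈ Set.Ioo (0 : ℝ) 1)
    (S : H → H) (hS : ∀ x y, ‖S x - S y‖ ≤ ‖x - y‖)
    (hT : ∀ x, T x = (1 - θ) • x + θ • S x)
    (hfix : ∃ x, T x = x) (x₀ : H) :
    ∃ xstar : H, T xstar = xstar ∧
      Filter.Tendsto (fun k => T^[k] x₀) Filter.atTop (nhds xstar) := by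
  obtain ⟨hθ0, hθ1⟩ := hθ
  obtain ⟨z, hz⟩ := hfix
  set x : ℕ → H := fun k => T^[k] x₀ with hxdef
  have hstep : ∀ k, x (k+1) = T (x k) := fun k => Function.iterate_succ_apply' T k x₀
  -- T is nonexpansive
  have hTnon : ∀ a b, ‖T a - T b‖ ≤ ‖a - b‖ := by
    intro a b
    rw [hT a, hT b]
    have he : (1-θ)•a + θ•S a - ((1-θ)•b + θ•S b) = (1-θ)•(a-b) + θ•(S a - S b) := by
      simp only [smul_sub]; abel
    rw [he]
    calc ‖(1-θ)•(a-b) + θ•(S a - S b)‖ ≤ ‖(1-θ)•(a-b)‖ + ‖θ•(S a - S b)‖ := norm_add_le _ _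
      _ = (1-θ)*‖a-b‖ + θ*‖S a - S b‖ := by
          rw [norm_smul, norm_smul, Real.norm_eq_abs, Real.norm_eq_abs,
            abs_of_pos (by linarith), abs_of_pos hθ0]
      _ ≤ (1-θ)*‖a-b‖ + θ*‖a-b‖ := by nlinarith [hS a b]
      _ = ‖a-b‖ := by ring
  -- S fixes z
  have hSz : S z = z := by
    have h := hz
    rw [hT z] at h
    have : θ • S z = θ • z := by
      have : (1-θ)•z + θ•S z - (1-θ)•z = z - (1-θ)•z := by rw [h]
      simpa [sub_smul, one_smul] using this
    exact smul_right_injective H (ne_of_gt hθ0) this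
  -- key inequality
  have key : ∀ w, ‖T w - z‖^2 ≤ ‖w - z‖^2 - ((1-θ)/θ) * ‖w - T w‖^2 := by
    intro w
    have hTwz : T w - z = (1-θ)•(w-z) + θ•(S w - z) := by
      rw [hT w]
      nth_rewrite 1 [show z = (1-θ)•z + θ•z by rw [← add_smul]; ring_nf; rw [one_smul]]
      simp only [smul_sub]; abel
    have hid := km_convex_norm_sq θ (w - z) (S w - z)
    rw [← hTwz] at hid
    have hsub : (w - z) - (S w - z) = w - S w := by abel
    rw [hsub] at hid
    have hSle : ‖S w - z‖ ≤ ‖w - z‖ := by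
      have := hS w z; rwa [hSz] at this
    have hwT : w - T w = θ • (w - S w) := by
      rw [hT w, smul_sub]
      nth_rewrite 1 [show w = (1-θ)•w + θ•w by rw [← add_smul]; ring_nf; rw [one_smul]]
      abel
    have hwT2 : ‖w - T w‖^2 = θ^2 * ‖w - S w‖^2 := by
      rw [hwT, norm_smul, Real.norm_eq_abs, mul_pow, sq_abs]
    have hθne : θ ≠ 0 := ne_of_gt hθ0
    rw [hid, hwT2]
    have : (1-θ)/θ * (θ^2 * ‖w - S w‖^2) = θ*(1-θ)*‖w - S w‖^2 := by
      field_simp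
    rw [this]
    have hsq : ‖S w - z‖^2 ≤ ‖w - z‖^2 := pow_le_pow_left₀ (norm_nonneg _) hSle 2
    nlinarith [hsq, hθ0]
  -- Fejér monotonicity wrt z
  have hmono : ∀ k, ‖x (k+1) - z‖ ≤ ‖x k - z‖ := by
    intro k
    rw [hstep k]
    calc ‖T (x k) - z‖ = ‖T (x k) - T z‖ := by rw [hz]
      _ ≤ ‖x k - z‖ := hTnon _ _
  have hanti : Antitone fun k => ‖x k - z‖ :=
    antitone_nat_of_succ_le hmono
  have hbdd : ∀ k, ‖x k - z‖ ≤ ‖x₀ - z‖ := fun k => hanti (Nat.zero_le k)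
  -- residual sum bound
  have hsum : ∀ n, ∑ k ∈ Finset.range n, ‖x k - T (x k)‖^2
      ≤ (θ/(1-θ)) * ‖x₀ - z‖^2 := by
    intro n
    have hc : (0:ℝ) < (1-θ)/θ := div_pos (by linarith) hθ0
    have htel : ∀ n, ((1-θ)/θ) * ∑ k ∈ Finset.range n, ‖x k - T (x k)‖^2
        ≤ ‖x₀ - z‖^2 - ‖x n - z‖^2 := by
      intro n
      induction n with
      | zero =>
        have hx0 : x 0 = x₀ := rfl
        simp [hx0]
      | succ m ih =>
        rw [Finset.sum_range_succ, mul_add]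
        have hk : ‖x (m+1) - z‖^2 ≤ ‖x m - z‖^2 - ((1-θ)/θ) * ‖x m - T (x m)‖^2 := by
          rw [hstep m]; exact key (x m)
        linarith
    have h1 := htel n
    have h2 : ‖x₀ - z‖^2 - ‖x n - z‖^2 ≤ ‖x₀ - z‖^2 := by nlinarith [sq_nonneg ‖x n - z‖]
    have h3 : ((1-θ)/θ) * ∑ k ∈ Finset.range n, ‖x k - T (x k)‖^2 ≤ ‖x₀ - z‖^2 := by linarith
    have hc' : (0:ℝ) < θ/(1-θ) := div_pos hθ0 (by linarith)
    have h4 := mul_le_mul_of_nonneg_left h3 (le_of_lt hc')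
    have h5 : θ/(1-θ) * (((1-θ)/θ) * ∑ k ∈ Finset.range n, ‖x k - T (x k)‖^2)
        = ∑ k ∈ Finset.range n, ‖x k - T (x k)‖^2 := by
      have hone : θ/(1-θ) * ((1-θ)/θ) = 1 := by
        rw [div_mul_div_comm, div_eq_one_iff_eq (by nlinarith)]
        ring
      rw [← mul_assoc, hone, one_mul]
    linarith
  -- summability ⇒ residual → 0
  have hsummable : Summable (fun k => ‖x k - T (x k)‖^2) := by
    apply summable_of_sum_range_le (fun k => by positivity) hsum
  have hres2 : Filter.Tendsto (fun k => ‖x k - T (x k)‖^2) Filter.atTop (nhds 0) :=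
    hsummable.tendsto_atTop_zero
  have hres : Filter.Tendsto (fun k => ‖x k - T (x k)‖) Filter.atTop (nhds 0) := by
    have h := (Real.continuous_sqrt.tendsto 0).comp hres2
    rw [Real.sqrt_zero] at h
    refine h.congr fun k => ?_
    simp [Function.comp, Real.sqrt_sq (norm_nonneg _)]
  -- bounded, extract convergent subsequence
  have hmem : ∀ k, x k ∈ Metric.closedBall z ‖x₀ - z‖ := by
    intro k
    rw [Metric.mem_closedBall, dist_eq_norm]
    exact hbdd k
  obtain ⟨xstar, -, φ, hφmono, hφlim⟩ :=
    tendsto_subseq_of_bounded (Metric.isBounded_closedBall (x := z) (r := ‖x₀ - z‖)) hmem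
  -- xstar is a fixed point
  have hTcont : Continuous T := by
    have : LipschitzWith 1 T := by
      apply LipschitzWith.of_dist_le_mul
      intro a b
      rw [dist_eq_norm, dist_eq_norm]
      simpa using hTnon a b
    exact this.continuous
  have hTφ : Filter.Tendsto (fun n => T (x (φ n))) Filter.atTop (nhds (T xstar)) :=
    (hTcont.tendsto xstar).comp hφlim
  have hTφ' : Filter.Tendsto (fun n => T (x (φ n))) Filter.atTop (nhds xstar) := by
    have hdiff : Filter.Tendsto (fun n => ‖x (φ n) - T (x (φ n))‖) Filter.atTop (nhds 0) :=
      hres.comp hφmono.tendsto_atTop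
    have : Filter.Tendsto (fun n => x (φ n) - T (x (φ n))) Filter.atTop (nhds 0) := by
      rwa [tendsto_zero_iff_norm_tendsto_zero]
    have := hφlim.sub this
    simpa using this
  have hfixstar : T xstar = xstar := tendsto_nhds_unique hTφ hTφ'
  refine ⟨xstar, hfixstar, ?_⟩
  -- convergence of full sequence
  have hmono' : Antitone fun k => ‖x k - xstar‖ := by
    apply antitone_nat_of_succ_le
    intro k
    rw [hstep k]
    calc ‖T (x k) - xstar‖ = ‖T (x k) - T xstar‖ := by rw [hfixstar]
      _ ≤ ‖x k - xstar‖ := hTnon _ _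
  have hbdd0 : BddBelow (Set.range fun k => ‖x k - xstar‖) :=
    ⟨0, fun r ⟨k, hk⟩ => hk ▸ norm_nonneg _⟩
  have hlim : Filter.Tendsto (fun k => ‖x k - xstar‖) Filter.atTop
      (nhds (⨅ k, ‖x k - xstar‖)) := tendsto_atTop_ciInf hmono' hbdd0
  have hsub : Filter.Tendsto (fun n => ‖x (φ n) - xstar‖) Filter.atTop (nhds 0) := by
    have h0 : Filter.Tendsto (fun n => x (φ n) - xstar) Filter.atTop (nhds 0) := by
      have := hφlim.sub (tendsto_const_nhds (x := xstar))
      simpa using this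
    simpa using h0.norm
  have hsub' : Filter.Tendsto (fun n => ‖x (φ n) - xstar‖) Filter.atTop
      (nhds (⨅ k, ‖x k - xstar‖)) := hlim.comp hφmono.tendsto_atTop
  have hinf0 : (⨅ k, ‖x k - xstar‖) = 0 := tendsto_nhds_unique hsub' hsub
  rw [hinf0] at hlim
  have : Filter.Tendsto x Filter.atTop (nhds xstar) := by
    rw [tendsto_iff_norm_sub_tendsto_zero]
    exact hlim
  exact this
end

section
/- Let f : H → R be convex and differentiable with β-Lipschitz gradient on a real inner product space H. Then f is cocoercive: for all x, y, ⟨∇f(x) − ∇f(y), x − y⟩ ≥ (1/β)‖∇f(x) − ∇f(y)‖². -/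
open Set InnerProductSpace

section aux

variable {H : Type*} [NormedAddCommGroup H] [InnerProductSpace ℝ H] [CompleteSpace H]

/-- Derivative of `f` along a line. -/
lemma line_hasDerivAt (f : H → ℝ) (f' : H → H) (hdiff : ∀ x, HasGradientAt f (f' x) x)
    (p v : H) (t : ℝ) :
    HasDerivAt (fun s : ℝ => f (p + s • v)) (inner ℝ (f' (p + t • v)) v : ℝ) t := by
  have hline : HasDerivAt (fun s : ℝ => p + s • v) v t := by
    simpa using ((hasDerivAt_id t).smul_const v).const_add p
  have := (hdiff (p + t • v)).hasFDerivAt.comp_hasDerivAt t hline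
  simpa [Function.comp_def, InnerProductSpace.toDual_apply_apply] using this

/-- Gradient inequality for convex functions. -/
lemma convex_grad_ineq (f : H → ℝ) (f' : H → H) (hconv : ConvexOn ℝ Set.univ f)
    (hdiff : ∀ x, HasGradientAt f (f' x) x) (x y : H) :
    f x + (inner ℝ (f' x) (y - x) : ℝ) ≤ f y := by
  set v := y - x with hv
  have hψ : ConvexOn ℝ Set.univ (fun t : ℝ => f (x + t • v)) := by
    have h := hconv.comp_affineMap (AffineMap.lineMap x y : ℝ →ᵃ[ℝ] H)
    simp only [Set.preimage_univ] at h
    have heq : (fun t : ℝ => f (x + t • v)) = f ∘ (AffineMap.lineMap x y : ℝ →ᵃ[ℝ] H) := by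
      funext t
      have harg : x + t • v = AffineMap.lineMap x y t := by
        simp only [AffineMap.lineMap_apply, vadd_eq_add, vsub_eq_sub, hv]
        module
      rw [Function.comp_apply, harg]
    rw [heq]
    exact h
  have hd : HasDerivAt (fun t : ℝ => f (x + t • v)) (inner ℝ (f' x) v : ℝ) 0 := by
    have := line_hasDerivAt f f' hdiff x v 0
    simpa using this
  have h01 : (0:ℝ) < 1 := one_pos
  have := hψ.le_slope_of_hasDerivAt (Set.mem_univ 0) (Set.mem_univ 1) h01 hd
  rw [slope_def_field] at this
  simp only [zero_smul, add_zero, one_smul] at this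
  have hxy : x + v = y := by rw [hv]; abel
  rw [hxy] at this
  simp only [div_one, sub_zero] at this
  linarith [this]

/-- Descent lemma: quadratic upper bound for β-smooth functions. -/
lemma descent_lemma (f : H → ℝ) (f' : H → H) (β : ℝ) (hβ : 0 < β)
    (hdiff : ∀ x, HasGradientAt f (f' x) x)
    (hlip : ∀ x y, ‖f' x - f' y‖ ≤ β * ‖x - y‖) (x y : H) :
    f y ≤ f x + (inner ℝ (f' x) (y - x) : ℝ) + β / 2 * ‖y - x‖ ^ 2 := by
  set v := y - x with hv
  set φ : ℝ → ℝ := fun t => f (x + t • v) - t * (inner ℝ (f' x) v : ℝ) - β * t ^ 2 / 2 * ‖v‖ ^ 2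
    with hφ
  have hder : ∀ t : ℝ, HasDerivAt φ
      ((inner ℝ (f' (x + t • v)) v : ℝ) - (inner ℝ (f' x) v : ℝ) - β * t * ‖v‖ ^ 2) t := by
    intro t
    have h1 := line_hasDerivAt f f' hdiff x v t
    have h2 : HasDerivAt (fun t : ℝ => t * (inner ℝ (f' x) v : ℝ)) (inner ℝ (f' x) v : ℝ) t := by
      simpa using (hasDerivAt_id t).mul_const (inner ℝ (f' x) v : ℝ)
    have h3 : HasDerivAt (fun t : ℝ => β * t ^ 2 / 2 * ‖v‖ ^ 2) (β * t * ‖v‖ ^ 2) t := by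
      have : HasDerivAt (fun t : ℝ => t ^ 2) (2 * t) t := by
        simpa using hasDerivAt_pow 2 t
      have := ((this.const_mul β).div_const 2).mul_const (‖v‖ ^ 2)
      have e : β * t * ‖v‖ ^ 2 = β * (2 * t) / 2 * ‖v‖ ^ 2 := by ring
      rw [e]; exact this
    exact (h1.sub h2).sub h3
  have hmono : AntitoneOn φ (Icc 0 1) := by
    apply antitoneOn_of_deriv_nonpos (convex_Icc 0 1)
    · exact fun t _ => (hder t).continuousAt.continuousWithinAt
    · exact fun t _ => (hder t).differentiableAt.differentiableWithinAt
    · intro t ht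
      rw [interior_Icc, mem_Ioo] at ht
      rw [(hder t).deriv]
      have key : (inner ℝ (f' (x + t • v)) v : ℝ) - (inner ℝ (f' x) v : ℝ) ≤ β * t * ‖v‖ ^ 2 := by
        have h1 : (inner ℝ (f' (x + t • v)) v : ℝ) - (inner ℝ (f' x) v : ℝ)
            = (inner ℝ (f' (x + t • v) - f' x) v : ℝ) := by rw [inner_sub_left]
        rw [h1]
        calc (inner ℝ (f' (x + t • v) - f' x) v : ℝ)
            ≤ ‖f' (x + t • v) - f' x‖ * ‖v‖ := real_inner_le_norm _ _
          _ ≤ β * ‖(x + t • v) - x‖ * ‖v‖ := by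
              gcongr; exact hlip _ _
          _ = β * t * ‖v‖ ^ 2 := by
              rw [add_sub_cancel_left, norm_smul, Real.norm_eq_abs, abs_of_pos ht.1]; ring
      linarith
  have h01 := hmono (Set.left_mem_Icc.2 zero_le_one) (Set.right_mem_Icc.2 zero_le_one) zero_le_one
  have hxy : x + v = y := by rw [hv]; abel
  simp only [hφ, zero_smul, add_zero, one_smul, zero_pow, mul_zero, zero_mul, sub_zero,
    one_pow, mul_one, one_mul, zero_div, hxy] at h01
  linarith

/-- One-sided Bregman–cocoercivity bound. -/
lemma bregman_bound (f : H → ℝ) (f' : H → H) (β : ℝ) (hβ : 0 < β)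
    (hconv : ConvexOn ℝ Set.univ f)
    (hdiff : ∀ x, HasGradientAt f (f' x) x)
    (hlip : ∀ x y, ‖f' x - f' y‖ ≤ β * ‖x - y‖) (x y : H) :
    (1 / (2 * β)) * ‖f' x - f' y‖ ^ 2 ≤ f y - f x - (inner ℝ (f' x) (y - x) : ℝ) := by
  set g : H → ℝ := fun z => f z - (inner ℝ (f' x) z : ℝ) with hg
  set g' : H → H := fun z => f' z - f' x with hg'
  have hgdiff : ∀ z, HasGradientAt g (g' z) z := by
    intro z
    have h1 : HasFDerivAt f (toDual ℝ H (f' z)) z := (hdiff z).hasFDerivAt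
    have h2 : HasFDerivAt (fun w : H => (inner ℝ (f' x) w : ℝ)) (toDual ℝ H (f' x)) z := by
      have := (toDual ℝ H (f' x)).hasFDerivAt (x := z)
      have e : (fun w : H => (inner ℝ (f' x) w : ℝ)) = ⇑(toDual ℝ H (f' x)) := by
        funext w; simp [InnerProductSpace.toDual_apply_apply]
      rw [e]; exact this
    have := h1.sub h2
    have heq : toDual ℝ H (f' z) - toDual ℝ H (f' x) = toDual ℝ H (g' z) := by
      simp [hg', map_sub]
    rw [heq] at this
    exact this
  have haff : ConvexOn ℝ Set.univ (fun z : H => -(inner ℝ (f' x) z : ℝ)) := by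
    refine ⟨convex_univ, ?_⟩
    intro a _ b _ s t _ _ _
    apply le_of_eq
    simp only [inner_add_right, real_inner_smul_right, smul_eq_mul]
    ring
  have hgconv : ConvexOn ℝ Set.univ g := by
    have h := hconv.add haff
    have : g = f + fun z : H => -(inner ℝ (f' x) z : ℝ) := by
      funext z; simp [hg, sub_eq_add_neg]
    rw [this]
    exact h
  have hglip : ∀ a b, ‖g' a - g' b‖ ≤ β * ‖a - b‖ := by
    intro a b
    have : g' a - g' b = f' a - f' b := by simp only [hg']; abel
    rw [this]; exact hlip a b
  -- x minimizes g since g' x = 0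
  have hg'x : g' x = 0 := by simp [hg']
  set z := y - (1 / β) • g' y with hz
  have hmin : g x ≤ g z := by
    have := convex_grad_ineq g g' hgconv hgdiff x z
    rw [hg'x] at this
    simpa using this
  have hdesc := descent_lemma g g' β hβ hgdiff hglip y z
  have hzy : z - y = -((1 / β) • g' y) := by rw [hz]; abel
  rw [hzy] at hdesc
  have hnorm : ‖-((1 / β) • g' y)‖ ^ 2 = (1 / β) ^ 2 * ‖g' y‖ ^ 2 := by
    rw [norm_neg, norm_smul, Real.norm_eq_abs, abs_of_pos (by positivity), mul_pow]
  have hinner : (inner ℝ (g' y) (-((1 / β) • g' y)) : ℝ) = -(1 / β) * ‖g' y‖ ^ 2 := by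
    rw [inner_neg_right, real_inner_smul_right, real_inner_self_eq_norm_sq]
    ring
  rw [hnorm, hinner] at hdesc
  have hchain : g x ≤ g y - (1 / (2 * β)) * ‖g' y‖ ^ 2 := by
    have hb : β / 2 * ((1 / β) ^ 2 * ‖g' y‖ ^ 2) - (1 / β) * ‖g' y‖ ^ 2
        = -(1 / (2 * β)) * ‖g' y‖ ^ 2 := by
      field_simp
      ring
    calc g x ≤ g z := hmin
      _ ≤ g y + (-(1 / β) * ‖g' y‖ ^ 2) + β / 2 * ((1 / β) ^ 2 * ‖g' y‖ ^ 2) := hdesc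
      _ = g y - (1 / (2 * β)) * ‖g' y‖ ^ 2 := by linarith [hb]
  have hgy : g' y = -(f' x - f' y) := by simp only [hg']; abel
  have hn : ‖g' y‖ ^ 2 = ‖f' x - f' y‖ ^ 2 := by rw [hgy, norm_neg]
  rw [hn] at hchain
  have hgx : g x = f x - (inner ℝ (f' x) x : ℝ) := rfl
  have hgyv : g y = f y - (inner ℝ (f' x) y : ℝ) := rfl
  have hi : (inner ℝ (f' x) (y - x) : ℝ) = (inner ℝ (f' x) y : ℝ) - (inner ℝ (f' x) x : ℝ) :=
    inner_sub_right _ _ _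
  rw [hgx, hgyv] at hchain
  linarith

end aux

/-- Baillon–Haddad: a convex differentiable function with β-Lipschitz gradient
is (1/β)-cocoercive. -/
theorem stmt5 {H : Type*} [NormedAddCommGroup H] [InnerProductSpace ℝ H] [CompleteSpace H]
    (f : H → ℝ) (f' : H → H) (β : ℝ) (hβ : 0 < β)
    (hconv : ConvexOn ℝ Set.univ f)
    (hdiff : ∀ x, HasGradientAt f (f' x) x)
    (hlip : ∀ x y, ‖f' x - f' y‖ ≤ β * ‖x - y‖) :
    ∀ x y : H, (1 / β) * ‖f' x - f' y‖ ^ 2 ≤ (inner ℝ (f' x - f' y) (x - y) : ℝ) := by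
  intro x y
  have h1 := bregman_bound f f' β hβ hconv hdiff hlip x y
  have h2 := bregman_bound f f' β hβ hconv hdiff hlip y x
  have hn : ‖f' y - f' x‖ = ‖f' x - f' y‖ := norm_sub_rev _ _
  rw [hn] at h2
  have hsplit : (inner ℝ (f' x - f' y) (x - y) : ℝ)
      = (inner ℝ (f' x) (x - y) : ℝ) - (inner ℝ (f' y) (x - y) : ℝ) := inner_sub_left _ _ _
  have h3 : (inner ℝ (f' x) (y - x) : ℝ) = -(inner ℝ (f' x) (x - y) : ℝ) := by
    rw [← inner_neg_right]; congr 1; abel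
  have h4 : (inner ℝ (f' y) (x - y) : ℝ) = (inner ℝ (f' y) (x - y) : ℝ) := rfl
  have hsum : (1 / β) * ‖f' x - f' y‖ ^ 2 = (1 / (2 * β)) * ‖f' x - f' y‖ ^ 2
      + (1 / (2 * β)) * ‖f' x - f' y‖ ^ 2 := by field_simp; ring
  rw [hsum, hsplit]
  rw [h3] at h1
  linarith
end

section
/- Let f be convex and β-smooth, D be θ-averaged (θ ∈ (0,1)) on (R^n, ⟨·,·⟩), ρ > β/2, and suppose T = D ∘ (I − ρ⁻¹∇f) has a fixed point. Then for any x₀, the PnP-ISTA iterates x_{k+1} = D(x_k − ρ⁻¹∇f(x_k)) converge to a fixed point of T. -/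
open InnerProductSpace Set Filter Topology

section PnPAux

variable {H : Type*} [NormedAddCommGroup H] [InnerProductSpace ℝ H]

local notation "⟪" x ", " y "⟫" => @inner ℝ _ _ x y

private lemma pnp_dirDeriv [CompleteSpace H] (f : H → ℝ) (g x d : H) (t : ℝ)
    (h : HasGradientAt f g (x + t • d)) :
    HasDerivAt (fun s : ℝ => f (x + s • d)) (⟪g, d⟫ : ℝ) t := by
  have hf := hasGradientAt_iff_hasFDerivAt.mp h
  have hline : HasDerivAt (fun s : ℝ => x + s • d) d t := by
    simpa using ((hasDerivAt_id t).smul_const d).const_add x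
  have hcomp := hf.comp_hasDerivAt t hline
  simp at hcomp
  exact hcomp

private lemma pnp_descent [CompleteSpace H] (f : H → ℝ) (f' : H → H) (β : ℝ)
    (hdiff : ∀ x, HasGradientAt f (f' x) x)
    (hlip : ∀ x y, ‖f' x - f' y‖ ≤ β * ‖x - y‖) (x y : H) :
    f y ≤ f x + ⟪f' x, y - x⟫ + β / 2 * ‖y - x‖ ^ 2 := by
  set d := y - x with hd
  set h : ℝ → ℝ := fun t => f (x + t • d) - t * ⟪f' x, d⟫ - β * t ^ 2 / 2 * ‖d‖ ^ 2 with hh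
  have hder : ∀ t : ℝ, HasDerivAt h
      (⟪f' (x + t • d), d⟫ - ⟪f' x, d⟫ - β * t * ‖d‖ ^ 2) t := by
    intro t
    have h1 := pnp_dirDeriv f (f' (x + t • d)) x d t (hdiff _)
    have h2 : HasDerivAt (fun t : ℝ => t * ⟪f' x, d⟫) (⟪f' x, d⟫) t := by
      simpa using (hasDerivAt_id t).mul_const (⟪f' x, d⟫ : ℝ)
    have h3 : HasDerivAt (fun t : ℝ => β * t ^ 2 / 2 * ‖d‖ ^ 2) (β * t * ‖d‖ ^ 2) t := by
      have := ((hasDerivAt_pow 2 t).const_mul β).div_const 2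
      have := this.mul_const (‖d‖ ^ 2)
      refine this.congr_deriv ?_
      rw [show (2:ℕ) - 1 = 1 from rfl]
      ring
    exact (h1.sub h2).sub h3
  have hanti : AntitoneOn h (Icc 0 1) := by
    apply antitoneOn_of_deriv_nonpos (convex_Icc 0 1)
    · exact Continuous.continuousOn (by
        have : Differentiable ℝ h := fun t => (hder t).differentiableAt
        exact this.continuous)
    · intro t ht
      exact (hder t).differentiableAt.differentiableWithinAt
    · intro t ht
      rw [interior_Icc] at ht
      rw [(hder t).deriv]
      have h4 : ⟪f' (x + t • d) - f' x, d⟫ ≤ ‖f' (x + t • d) - f' x‖ * ‖d‖ :=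
        real_inner_le_norm _ _
      have h5 : ‖f' (x + t • d) - f' x‖ ≤ β * (t * ‖d‖) := by
        have := hlip (x + t • d) x
        simpa [norm_smul, abs_of_pos ht.1] using this
      have h6 : ⟪f' (x + t • d), d⟫ - ⟪f' x, d⟫ = ⟪f' (x + t • d) - f' x, d⟫ := by
        rw [inner_sub_left]
      rw [h6]
      nlinarith [norm_nonneg d, norm_nonneg (f' (x + t • d) - f' x), ht.1.le]
  have := hanti (by constructor <;> norm_num) (by constructor <;> norm_num) (zero_le_one)
  simp only [hh] at this
  simp only [one_smul, zero_smul, add_zero] at this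
  have hxy : x + d = y := by rw [hd]; abel
  rw [hxy] at this
  nlinarith [this]

private lemma pnp_lowerBound [CompleteSpace H] (f : H → ℝ) (f' : H → H)
    (hconv : ConvexOn ℝ Set.univ f)
    (hdiff : ∀ x, HasGradientAt f (f' x) x) (x y : H) :
    f x + ⟪f' x, y - x⟫ ≤ f y := by
  set d := y - x with hd
  have hg : HasDerivAt (fun s : ℝ => f (x + s • d)) (⟪f' x, d⟫ : ℝ) 0 := by
    have := pnp_dirDeriv f (f' (x + (0:ℝ) • d)) x d 0 (hdiff _)
    simpa using this
  have hslope : Tendsto (slope (fun s : ℝ => f (x + s • d)) 0) (𝓝[>] 0)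
      (𝓝 (⟪f' x, d⟫ : ℝ)) :=
    (hasDerivAt_iff_tendsto_slope.mp hg).mono_left
      (nhdsWithin_mono 0 (fun t ht => Set.mem_compl_singleton_iff.mpr (ne_of_gt ht)))
  have hbound : ∀ᶠ t in 𝓝[>] (0:ℝ), slope (fun s : ℝ => f (x + s • d)) 0 t ≤ f y - f x := by
    filter_upwards [Ioo_mem_nhdsGT_of_mem (Set.mem_Ico.mpr ⟨le_refl 0, zero_lt_one⟩)]
      with t ht
    have hconv' := hconv.2 (Set.mem_univ x) (Set.mem_univ y)
      (by linarith [ht.2] : (0:ℝ) ≤ 1 - t) ht.1.le (by ring)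
    have heq : (1 - t) • x + t • y = x + t • d := by
      rw [hd]; module
    rw [heq] at hconv'
    have ht0 : (0:ℝ) < t := ht.1
    have hs : slope (fun s : ℝ => f (x + s • d)) 0 t = (f (x + t • d) - f x) / t := by
      rw [slope_def_field]
      simp
    rw [hs, div_le_iff₀ ht0]
    simp only [smul_eq_mul] at hconv'
    nlinarith [hconv']
  have := le_of_tendsto hslope hbound
  have : (⟪f' x, d⟫ : ℝ) ≤ f y - f x := this
  linarith

private lemma pnp_keyIneq [CompleteSpace H] (f : H → ℝ) (f' : H → H) (β : ℝ) (hβ : 0 < β)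
    (hconv : ConvexOn ℝ Set.univ f)
    (hdiff : ∀ x, HasGradientAt f (f' x) x)
    (hlip : ∀ x y, ‖f' x - f' y‖ ≤ β * ‖x - y‖) (x y : H) :
    f x + ⟪f' x, y - x⟫ + 1 / (2 * β) * ‖f' y - f' x‖ ^ 2 ≤ f y := by
  set Δ := f' y - f' x with hΔ
  set w := y - (β⁻¹ : ℝ) • Δ with hw
  have h1 := pnp_lowerBound f f' hconv hdiff x w
  have h2 := pnp_descent f f' β hdiff hlip y w
  have hwy : w - y = -(β⁻¹ : ℝ) • Δ := by rw [hw]; module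
  have hwx : w - x = (y - x) - (β⁻¹ : ℝ) • Δ := by rw [hw]; module
  have e1 : ⟪f' x, w - x⟫ = ⟪f' x, y - x⟫ - β⁻¹ * ⟪f' x, Δ⟫ := by
    rw [hwx, inner_sub_right, real_inner_smul_right]
  have e2 : ⟪f' y, w - y⟫ = -(β⁻¹ * ⟪f' y, Δ⟫) := by
    rw [hwy, real_inner_smul_right]; ring
  have e3 : ‖w - y‖ ^ 2 = β⁻¹ ^ 2 * ‖Δ‖ ^ 2 := by
    rw [hwy, norm_smul, norm_neg, Real.norm_eq_abs, abs_of_pos (inv_pos.mpr hβ)]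
    ring
  have e4 : ⟪f' y, Δ⟫ - ⟪f' x, Δ⟫ = ‖Δ‖ ^ 2 := by
    rw [← inner_sub_left, hΔ, real_inner_self_eq_norm_sq]
  rw [e1] at h1
  rw [e2, e3] at h2
  have hfield : β / 2 * (β⁻¹ ^ 2 * ‖Δ‖ ^ 2) = 1 / (2 * β) * ‖Δ‖ ^ 2 := by
    field_simp
  have hfield2 : β⁻¹ * ‖Δ‖ ^ 2 = 2 * (1 / (2 * β) * ‖Δ‖ ^ 2) := by
    field_simp
  linarith [h1, h2, e4, mul_le_mul_of_nonneg_left (le_of_eq e4.symm) (le_of_lt (inv_pos.mpr hβ))]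

private lemma pnp_cocoercive [CompleteSpace H] (f : H → ℝ) (f' : H → H) (β : ℝ) (hβ : 0 < β)
    (hconv : ConvexOn ℝ Set.univ f)
    (hdiff : ∀ x, HasGradientAt f (f' x) x)
    (hlip : ∀ x y, ‖f' x - f' y‖ ≤ β * ‖x - y‖) (x y : H) :
    β⁻¹ * ‖f' x - f' y‖ ^ 2 ≤ ⟪f' x - f' y, x - y⟫ := by
  have h1 := pnp_keyIneq f f' β hβ hconv hdiff hlip x y
  have h2 := pnp_keyIneq f f' β hβ hconv hdiff hlip y x
  have e1 : ⟪f' x, y - x⟫ + ⟪f' y, x - y⟫ = -⟪f' x - f' y, x - y⟫ := by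
    rw [inner_sub_left]
    have : ⟪f' x, y - x⟫ = -⟪f' x, x - y⟫ := by
      rw [← inner_neg_right]; congr 1; abel
    rw [this]; ring
  have e2 : ‖f' y - f' x‖ = ‖f' x - f' y‖ := norm_sub_rev _ _
  rw [e2] at h1
  have hfield2 : β⁻¹ * ‖f' x - f' y‖ ^ 2 = 2 * (1 / (2 * β) * ‖f' x - f' y‖ ^ 2) := by
    field_simp
  linarith [h1, h2, e1]

private lemma pnp_Dineq (D : H → H) (θ : ℝ) (hθ : θ ∈ Set.Ioo (0 : ℝ) 1)
    (S : H → H) (hS : ∀ x y, ‖S x - S y‖ ≤ ‖x - y‖)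
    (hD : ∀ x, D x = (1 - θ) • x + θ • S x) (u v : H) :
    ‖D u - D v‖ ^ 2 ≤ ‖u - v‖ ^ 2 - θ * (1 - θ) * ‖(u - S u) - (v - S v)‖ ^ 2 := by
  set a := u - v with ha
  set b := S u - S v with hb
  have hDuv : D u - D v = (1 - θ) • a + θ • b := by
    rw [hD, hD]; module
  have hq : (u - S u) - (v - S v) = a - b := by module
  have e1 : ‖(1 - θ) • a + θ • b‖ ^ 2
      = (1 - θ) ^ 2 * ‖a‖ ^ 2 + 2 * (θ * (1 - θ)) * ⟪a, b⟫ + θ ^ 2 * ‖b‖ ^ 2 := by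
    rw [norm_add_sq_real, norm_smul, norm_smul, real_inner_smul_left, real_inner_smul_right,
      Real.norm_eq_abs, Real.norm_eq_abs, abs_of_pos (by linarith [hθ.2] : (0:ℝ) < 1 - θ),
      abs_of_pos hθ.1]
    ring
  have e2 : ‖a - b‖ ^ 2 = ‖a‖ ^ 2 - 2 * ⟪a, b⟫ + ‖b‖ ^ 2 := norm_sub_sq_real a b
  have e3 : ‖b‖ ^ 2 ≤ ‖a‖ ^ 2 := by
    have := hS u v
    nlinarith [norm_nonneg b, norm_nonneg a]
  rw [hDuv, hq, e1, e2]
  nlinarith [hθ.1, hθ.2]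

private lemma pnp_Gineq (f' : H → H) (β γ : ℝ) (hγ : 0 < γ)
    (hcoco : ∀ x y, β⁻¹ * ‖f' x - f' y‖ ^ 2 ≤ ⟪f' x - f' y, x - y⟫) (x y : H) :
    ‖(x - γ • f' x) - (y - γ • f' y)‖ ^ 2
      ≤ ‖x - y‖ ^ 2 - (2 * γ * β⁻¹ - γ ^ 2) * ‖f' x - f' y‖ ^ 2 := by
  set Δ := f' x - f' y with hΔ
  have hG : (x - γ • f' x) - (y - γ • f' y) = (x - y) - γ • Δ := by rw [hΔ]; module
  have e1 : ‖(x - y) - γ • Δ‖ ^ 2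
      = ‖x - y‖ ^ 2 - 2 * γ * ⟪Δ, x - y⟫ + γ ^ 2 * ‖Δ‖ ^ 2 := by
    rw [norm_sub_sq_real, real_inner_smul_right, norm_smul, Real.norm_eq_abs,
      abs_of_pos hγ, real_inner_comm]
    ring
  rw [hG, e1]
  have := hcoco x y
  nlinarith [this, hγ.le]

private lemma pnp_sq_le (a b : ℝ) (ha : 0 ≤ a) (hb : 0 ≤ b) (h : a ^ 2 ≤ b ^ 2) : a ≤ b := by
  nlinarith

private lemma pnp_km_conv [FiniteDimensional ℝ H] (T : H → H) (z : H) (hz : T z = z)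
    (c : ℝ) (hc : 0 < c)
    (hne : ∀ x y, ‖T x - T y‖ ≤ ‖x - y‖)
    (hkey : ∀ w : H, ∀ x, T w = w → ‖T x - w‖ ^ 2 ≤ ‖x - w‖ ^ 2 - c * ‖x - T x‖ ^ 2)
    (x₀ : H) :
    ∃ xstar, T xstar = xstar ∧
      Filter.Tendsto (fun k => T^[k] x₀) Filter.atTop (nhds xstar) := by
  set u : ℕ → H := fun k => T^[k] x₀ with hu
  have hsucc : ∀ k, u (k + 1) = T (u k) := fun k => Function.iterate_succ_apply' T k x₀
  have hTcont : Continuous T := by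
    rw [Metric.continuous_iff]
    intro x ε hε
    exact ⟨ε, hε, fun y hy => by
      rw [dist_eq_norm] at *; exact lt_of_le_of_lt (hne y x) hy⟩
  set a : ℕ → ℝ := fun k => ‖u k - z‖ ^ 2 with haa
  have hstep : ∀ k, a (k + 1) + c * ‖u k - T (u k)‖ ^ 2 ≤ a k := by
    intro k
    have := hkey z (u k) hz
    rw [haa]; simp only [hsucc]
    linarith
  have hanti : Antitone a := antitone_nat_of_succ_le (fun k => by
    have := hstep k
    nlinarith [sq_nonneg ‖u k - T (u k)‖, mul_nonneg hc.le (sq_nonneg ‖u k - T (u k)‖)])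
  have hbdd : BddBelow (Set.range a) := ⟨0, fun y ⟨k, hk⟩ => hk ▸ sq_nonneg _⟩
  have hatend : Tendsto a atTop (𝓝 (⨅ k, a k)) := tendsto_atTop_ciInf hanti hbdd
  have hatend' : Tendsto (fun k => a (k + 1)) atTop (𝓝 (⨅ k, a k)) :=
    hatend.comp (tendsto_add_atTop_nat 1)
  have hdiff0 : Tendsto (fun k => a k - a (k + 1)) atTop (𝓝 0) := by
    have := hatend.sub hatend'
    simpa using this
  have hres : Tendsto (fun k => ‖u k - T (u k)‖ ^ 2) atTop (𝓝 0) := by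
    have hb : ∀ k, ‖u k - T (u k)‖ ^ 2 ≤ c⁻¹ * (a k - a (k + 1)) := by
      intro k
      rw [le_inv_mul_iff₀ hc]
      linarith [hstep k]
    have hlim : Tendsto (fun k => c⁻¹ * (a k - a (k + 1))) atTop (𝓝 0) := by
      have := hdiff0.const_mul c⁻¹
      simpa using this
    exact squeeze_zero (fun k => sq_nonneg _) hb hlim
  have hresn : Tendsto (fun k => ‖u k - T (u k)‖) atTop (𝓝 0) := by
    have := (Real.continuous_sqrt.tendsto 0).comp hres
    simp only [Function.comp_def, Real.sqrt_zero] at this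
    convert this using 2 with k
    rw [Real.sqrt_sq (norm_nonneg _)]
  have hres0 : Tendsto (fun k => u k - T (u k)) atTop (𝓝 0) :=
    tendsto_zero_iff_norm_tendsto_zero.mpr hresn
  have hball : ∀ k, u k ∈ Metric.closedBall z ‖x₀ - z‖ := by
    intro k
    rw [Metric.mem_closedBall, dist_eq_norm]
    have h1 : a k ≤ a 0 := hanti (Nat.zero_le k)
    have h0 : a 0 = ‖x₀ - z‖ ^ 2 := by simp [haa, hu]
    exact pnp_sq_le _ _ (norm_nonneg _) (norm_nonneg _) (by rw [← h0]; exact h1)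
  obtain ⟨xstar, _, φ, hφ, hφtend⟩ :=
    (isCompact_closedBall z ‖x₀ - z‖).tendsto_subseq hball
  have hsub1 : Tendsto (fun j => u (φ j) - T (u (φ j))) atTop (𝓝 0) :=
    hres0.comp hφ.tendsto_atTop
  have hsub2 : Tendsto (fun j => u (φ j) - T (u (φ j))) atTop (𝓝 (xstar - T xstar)) :=
    hφtend.sub ((hTcont.tendsto xstar).comp hφtend)
  have hfixstar : T xstar = xstar := by
    have := tendsto_nhds_unique hsub2 hsub1
    exact (sub_eq_zero.mp this).symm
  refine ⟨xstar, hfixstar, ?_⟩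
  set b : ℕ → ℝ := fun k => ‖u k - xstar‖ with hbb
  have hbanti : Antitone b := antitone_nat_of_succ_le (fun k => by
    rw [hbb]; simp only [hsucc]
    calc ‖T (u k) - xstar‖ = ‖T (u k) - T xstar‖ := by rw [hfixstar]
    _ ≤ ‖u k - xstar‖ := hne _ _)
  have hbbdd : BddBelow (Set.range b) := ⟨0, fun y ⟨k, hk⟩ => hk ▸ norm_nonneg _⟩
  have hbtend : Tendsto b atTop (𝓝 (⨅ k, b k)) := tendsto_atTop_ciInf hbanti hbbdd
  have hbsub : Tendsto (fun j => b (φ j)) atTop (𝓝 (⨅ k, b k)) :=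
    hbtend.comp hφ.tendsto_atTop
  have hbsub0 : Tendsto (fun j => b (φ j)) atTop (𝓝 0) := by
    have := (continuous_norm.tendsto (xstar - xstar)).comp (hφtend.sub tendsto_const_nhds)
    simp at this
    exact this
  have hinf0 : (⨅ k, b k) = 0 := tendsto_nhds_unique hbsub hbsub0
  rw [hinf0] at hbtend
  rw [tendsto_iff_norm_sub_tendsto_zero]
  exact hbtend

end PnPAux

/-- Fixed-point convergence of PnP-ISTA: for convex β-smooth f, θ-averaged
denoiser D and ρ > β/2, if T = D ∘ (I − ρ⁻¹∇f) has a fixed point then the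
iterates x_{k+1} = D(x_k − ρ⁻¹∇f(x_k)) converge to a fixed point of T. -/
theorem stmt9 {H : Type*} [NormedAddCommGroup H] [InnerProductSpace ℝ H]
    [FiniteDimensional ℝ H]
    (f : H → ℝ) (f' : H → H)
    (β ρ : ℝ) (hβ : 0 < β) (hρ : β / 2 < ρ)
    (hconv : ConvexOn ℝ Set.univ f)
    (hdiff : ∀ x, HasGradientAt f (f' x) x)
    (hlip : ∀ x y, ‖f' x - f' y‖ ≤ β * ‖x - y‖)
    (D : H → H) (θ : ℝ) (hθ : θ ∈ Set.Ioo (0 : ℝ) 1)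
    (S : H → H) (hS : ∀ x y, ‖S x - S y‖ ≤ ‖x - y‖)
    (hD : ∀ x, D x = (1 - θ) • x + θ • S x)
    (T : H → H) (hT : ∀ x, T x = D (x - ρ⁻¹ • f' x))
    (hfix : ∃ x, T x = x) (x₀ : H) :
    ∃ xstar, T xstar = xstar ∧
      Filter.Tendsto (fun k => T^[k] x₀) Filter.atTop (nhds xstar) := by
  obtain ⟨z, hz⟩ := hfix
  have hρ0 : (0:ℝ) < ρ := lt_trans (half_pos hβ) hρ
  set γ : ℝ := ρ⁻¹ with hγdef
  have hγ : 0 < γ := inv_pos.mpr hρ0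
  have hγlt : γ < 2 * β⁻¹ := by
    have h1 : ρ⁻¹ < (β / 2)⁻¹ := inv_strictAnti₀ (half_pos hβ) hρ
    calc γ = ρ⁻¹ := hγdef
    _ < (β / 2)⁻¹ := h1
    _ = 2 * β⁻¹ := by rw [inv_div]; ring
  clear_value γ
  have hcoco := pnp_cocoercive f f' β hβ hconv hdiff hlip
  have hGineq := pnp_Gineq f' β γ hγ hcoco
  have hDineq := pnp_Dineq D θ hθ S hS hD
  set A : ℝ := 2 * γ * β⁻¹ - γ ^ 2 with hA
  have hApos : 0 < A := by
    rw [hA]; nlinarith [hγ, hγlt]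
  clear_value A
  set c : ℝ := min (A / (2 * γ ^ 2)) ((1 - θ) / (2 * θ)) with hc
  have h2γ : (0:ℝ) < 2 * γ ^ 2 := by nlinarith [hγ]
  have h2θ : (0:ℝ) < 2 * θ := by linarith [hθ.1]
  have hcpos : 0 < c := by
    rw [hc]
    exact lt_min (div_pos hApos h2γ) (div_pos (by linarith [hθ.2]) h2θ)
  have hcle1 : c ≤ A / (2 * γ ^ 2) := by rw [hc]; exact min_le_left _ _
  have hcle2 : c ≤ (1 - θ) / (2 * θ) := by rw [hc]; exact min_le_right _ _
  clear_value c
  -- nonexpansiveness of T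
  have hne : ∀ x y, ‖T x - T y‖ ≤ ‖x - y‖ := by
    intro x y
    have h1 := hDineq (x - γ • f' x) (y - γ • f' y)
    have h2 := hGineq x y
    have hTx : T x - T y = D (x - γ • f' x) - D (y - γ • f' y) := by
      rw [hT, hT]
    apply pnp_sq_le _ _ (norm_nonneg _) (norm_nonneg _)
    rw [hTx]
    have hn1 : 0 ≤ θ * (1 - θ) * ‖((x - γ • f' x) - S (x - γ • f' x))
        - ((y - γ • f' y) - S (y - γ • f' y))‖ ^ 2 :=
      mul_nonneg (mul_nonneg hθ.1.le (by linarith [hθ.2])) (sq_nonneg _)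
    have hn2 : 0 ≤ A * ‖f' x - f' y‖ ^ 2 := mul_nonneg hApos.le (sq_nonneg _)
    linarith
  -- key strong-Fejér inequality
  have hkey : ∀ w : H, ∀ x, T w = w → ‖T x - w‖ ^ 2 ≤ ‖x - w‖ ^ 2 - c * ‖x - T x‖ ^ 2 := by
    intro w x hw
    have h1 := hDineq (x - γ • f' x) (w - γ • f' w)
    have h2 := hGineq x w
    set u : H := x - γ • f' x with hudef
    set v : H := w - γ • f' w with hvdef
    set Δ : H := f' x - f' w with hΔdef
    set q : H := (u - S u) - (v - S v) with hqdef
    have hTx : T x = D u := by rw [hT, hudef]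
    have hTw : w = D v := by rw [← hw, hT, hvdef]
    -- residual decomposition: x - T x = γ • Δ + θ • q
    have hwv : w = (1 - θ) • v + θ • S v := by rw [hTw, hD]
    have h0 : γ • f' w + θ • (v - S v) = (0:H) := by
      have hγf : γ • f' w = w - v := by rw [hvdef]; module
      rw [hγf]
      nth_rewrite 1 [hwv]
      module
    have hxu : x - u - γ • f' x = 0 := by rw [hudef]; module
    have hdecomp : x - T x
        = (x - u - γ • f' x) + (γ • Δ + θ • q) + (γ • f' w + θ • (v - S v)) := by
      rw [hTx, hD, hΔdef, hqdef]
      module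
    have h3 : x - T x = γ • Δ + θ • q := by
      rw [hdecomp, hxu, h0]
      simp
    have h4 : ‖x - T x‖ ^ 2 ≤ 2 * (γ ^ 2 * ‖Δ‖ ^ 2) + 2 * (θ ^ 2 * ‖q‖ ^ 2) := by
      rw [h3]
      have e1 : ‖γ • Δ + θ • q‖ ^ 2 = ‖γ • Δ‖ ^ 2 + 2 * ⟪γ • Δ, θ • q⟫_ℝ + ‖θ • q‖ ^ 2 :=
        norm_add_sq_real _ _
      have e2 : ‖γ • Δ‖ ^ 2 = γ ^ 2 * ‖Δ‖ ^ 2 := by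
        rw [norm_smul, Real.norm_eq_abs, abs_of_pos hγ]; ring
      have e3 : ‖θ • q‖ ^ 2 = θ ^ 2 * ‖q‖ ^ 2 := by
        rw [norm_smul, Real.norm_eq_abs, abs_of_pos hθ.1]; ring
      have e4 : ⟪γ • Δ, θ • q⟫_ℝ ≤ ‖γ • Δ‖ * ‖θ • q‖ := real_inner_le_norm _ _
      nlinarith [sq_nonneg (‖γ • Δ‖ - ‖θ • q‖), e4]
    have hb1 : c * (2 * (γ ^ 2 * ‖Δ‖ ^ 2)) ≤ A * ‖Δ‖ ^ 2 := by
      have hstep := mul_le_mul_of_nonneg_right hcle1 (sq_nonneg ‖Δ‖)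
      calc c * (2 * (γ ^ 2 * ‖Δ‖ ^ 2)) = (c * ‖Δ‖ ^ 2) * (2 * γ ^ 2) := by ring
      _ ≤ (A / (2 * γ ^ 2) * ‖Δ‖ ^ 2) * (2 * γ ^ 2) :=
          mul_le_mul_of_nonneg_right hstep h2γ.le
      _ = A / (2 * γ ^ 2) * (2 * γ ^ 2) * ‖Δ‖ ^ 2 := by ring
      _ = A * ‖Δ‖ ^ 2 := by rw [div_mul_cancel₀ A h2γ.ne']
    have hb2 : c * (2 * (θ ^ 2 * ‖q‖ ^ 2)) ≤ θ * (1 - θ) * ‖q‖ ^ 2 := by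
      have hstep := mul_le_mul_of_nonneg_right hcle2 (sq_nonneg ‖q‖)
      calc c * (2 * (θ ^ 2 * ‖q‖ ^ 2)) = ((c * ‖q‖ ^ 2) * (2 * θ)) * θ := by ring
      _ ≤ (((1 - θ) / (2 * θ) * ‖q‖ ^ 2) * (2 * θ)) * θ :=
          mul_le_mul_of_nonneg_right
            (mul_le_mul_of_nonneg_right hstep h2θ.le) hθ.1.le
      _ = ((1 - θ) / (2 * θ) * (2 * θ)) * θ * ‖q‖ ^ 2 := by ring
      _ = θ * (1 - θ) * ‖q‖ ^ 2 := by rw [div_mul_cancel₀ (1 - θ) h2θ.ne']; ring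
    have h5 : c * ‖x - T x‖ ^ 2 ≤ A * ‖Δ‖ ^ 2 + θ * (1 - θ) * ‖q‖ ^ 2 := by
      have hm := mul_le_mul_of_nonneg_left h4 hcpos.le
      rw [mul_add] at hm
      linarith [hb1, hb2]
    have hfin : ‖T x - w‖ ^ 2 = ‖D u - D v‖ ^ 2 := by rw [hTx, ← hTw]
    rw [hfin]
    linarith [h1, h2, h5]
  exact pnp_km_conv T z hz c hcpos hne hkey x₀
end

section
/- Let f be convex on (R^n, ⟨·,·⟩), let D be θ-averaged for some θ ∈ (0,1/2], and define T = ½I + ½(2Prox_{ρ⁻¹f} − I)∘(2D − I) for ρ > 0. If T has a fixed point, then the PnP-ADMM iterates x_{k+1} = Prox_{ρ⁻¹f}(y_k − z_k), y_{k+1} = D(x_{k+1} + z_k), z_{k+1} = z_k + x_{k+1} − y_{k+1} converge: x_k → Prox_{ρ⁻¹f}∘(2D−I)(u*), y_k → D(u*), z_k → (I−D)(u*) for some fixed point u* of T. -/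
open Filter Topology

section KMAux
variable {H : Type*} [NormedAddCommGroup H] [InnerProductSpace ℝ H]

local notation "⟪" a ", " b "⟫" => @inner ℝ _ _ a b



lemma prox_var (f : H → ℝ) (hconv : ConvexOn ℝ Set.univ f) (ρ : ℝ) (hρ : 0 < ρ)
    (P : H → H)
    (hP : ∀ x y : H, ρ⁻¹ * f (P x) + ‖P x - x‖ ^ 2 / 2 ≤ ρ⁻¹ * f y + ‖y - x‖ ^ 2 / 2)
    (x y : H) : ⟪x - P x, y - P x⟫ ≤ ρ⁻¹ * (f y - f (P x)) := by
  have key : ∀ n : ℕ, ⟪x - P x, y - P x⟫ ≤ ρ⁻¹ * (f y - f (P x)) + (1/((n:ℝ)+1))/2 * ‖y - P x‖^2 := by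
    intro n
    set t : ℝ := 1/((n:ℝ)+1) with ht
    have ht0 : 0 < t := by positivity
    have ht1 : t ≤ 1 := by
      rw [ht, div_le_one (by positivity)]
      linarith [Nat.cast_nonneg (α := ℝ) n]
    have hc := hconv.2 (Set.mem_univ (P x)) (Set.mem_univ y)
      (by linarith : (0:ℝ) ≤ 1 - t) ht0.le (by ring)
    have h1 := hP x ((1-t) • P x + t • y)
    have hrw : (1-t) • P x + t • y - x = (P x - x) + t • (y - P x) := by
      module
    have hexp : ‖(1-t) • P x + t • y - x‖^2
        = ‖P x - x‖^2 + 2 * t * ⟪P x - x, y - P x⟫ + t^2 * ‖y - P x‖^2 := by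
      rw [hrw, @norm_add_sq_real, real_inner_smul_right, norm_smul]
      rw [Real.norm_eq_abs, abs_of_pos ht0]
      ring
    have hinn : ⟪P x - x, y - P x⟫ = - ⟪x - P x, y - P x⟫ := by
      rw [← inner_neg_left]; congr 1; abel
    rw [hexp] at h1
    have hfle : f ((1-t) • P x + t • y) ≤ (1-t) * f (P x) + t * f y := hc
    have hρinv : (0:ℝ) < ρ⁻¹ := by positivity
    nlinarith [mul_le_mul_of_nonneg_left hfle hρinv.le, sq_nonneg t]
  have hlim : Tendsto (fun n : ℕ => ρ⁻¹ * (f y - f (P x)) + (1/((n:ℝ)+1))/2 * ‖y - P x‖^2)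
      atTop (nhds (ρ⁻¹ * (f y - f (P x)) + 0/2 * ‖y - P x‖^2)) := by
    apply Tendsto.add tendsto_const_nhds
    apply Tendsto.mul_const
    apply Tendsto.div_const
    exact tendsto_one_div_add_atTop_nhds_zero_nat
  simp only [zero_div, zero_mul, add_zero] at hlim
  exact ge_of_tendsto hlim (Filter.Eventually.of_forall key)



-- firm nonexpansiveness from variational inequality
lemma firm_of_var (f : H → ℝ) (ρ : ℝ) (P : H → H)
    (hvar : ∀ x y : H, ⟪x - P x, y - P x⟫ ≤ ρ⁻¹ * (f y - f (P x)))
    (a b : H) : ‖P a - P b‖^2 ≤ ⟪P a - P b, a - b⟫ := by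
  have h1 := hvar a (P b)
  have h2 := hvar b (P a)
  have e1 : ⟪P a - P b, a - b⟫ - ‖P a - P b‖^2
      = - ⟪a - P a, P b - P a⟫ - ⟪b - P b, P a - P b⟫ := by
    simp only [← real_inner_self_eq_norm_sq]
    simp only [inner_sub_left, inner_sub_right, real_inner_comm (P a)]
    ring_nf
    simp only [real_inner_comm b (P a), real_inner_comm b (P b), real_inner_comm (P a) (P b),
      real_inner_comm a (P a), real_inner_comm a (P b)]
    ring
  linarith

lemma P_nonexp (P : H → H)
    (hfirm : ∀ a b : H, ‖P a - P b‖^2 ≤ ⟪P a - P b, a - b⟫)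
    (a b : H) : ‖P a - P b‖ ≤ ‖a - b‖ := by
  rcases eq_or_lt_of_le (norm_nonneg (P a - P b)) with h | h
  · rw [← h]; exact norm_nonneg _
  · have := (hfirm a b).trans (real_inner_le_norm _ _)
    rw [pow_two] at this
    exact le_of_mul_le_mul_left this h

lemma refl_nonexp (P : H → H)
    (hfirm : ∀ a b : H, ‖P a - P b‖^2 ≤ ⟪P a - P b, a - b⟫)
    (a b : H) : ‖((2:ℝ) • P a - a) - ((2:ℝ) • P b - b)‖ ≤ ‖a - b‖ := by
  have key : ‖((2:ℝ) • P a - a) - ((2:ℝ) • P b - b)‖^2 ≤ ‖a - b‖^2 := by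
    have hrw : ((2:ℝ) • P a - a) - ((2:ℝ) • P b - b) = (2:ℝ) • (P a - P b) - (a - b) := by
      module
    rw [hrw, @norm_sub_sq_real, real_inner_smul_left, norm_smul]
    have := hfirm a b
    simp only [Real.norm_ofNat]
    nlinarith
  exact (pow_le_pow_iff_left₀ (norm_nonneg _) (norm_nonneg _) two_ne_zero).mp key



lemma km [FiniteDimensional ℝ H] (N : H → H) (hN : ∀ a b, ‖N a - N b‖ ≤ ‖a - b‖)
    (T : H → H) (hT : ∀ w, T w = (1/2:ℝ) • w + (1/2:ℝ) • N w)
    (v : H) (hv : T v = v) (u : ℕ → H) (hu : ∀ k, u (k+1) = T (u k)) :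
    ∃ w : H, T w = w ∧ Tendsto u atTop (nhds w) := by
  have hNv : N v = v := by
    have h := hv
    rw [hT] at h
    have : (2:ℝ) • ((1/2:ℝ) • v + (1/2:ℝ) • N v) - v = N v := by module
    rw [h] at this
    rw [← this]; module
  -- T is nonexpansive
  have hTne : ∀ a b, ‖T a - T b‖ ≤ ‖a - b‖ := by
    intro a b
    rw [hT, hT]
    have : (1/2:ℝ) • a + (1/2:ℝ) • N a - ((1/2:ℝ) • b + (1/2:ℝ) • N b)
        = (1/2:ℝ) • (a - b) + (1/2:ℝ) • (N a - N b) := by module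
    rw [this]
    calc ‖(1/2:ℝ) • (a - b) + (1/2:ℝ) • (N a - N b)‖
        ≤ ‖(1/2:ℝ) • (a - b)‖ + ‖(1/2:ℝ) • (N a - N b)‖ := norm_add_le _ _
      _ ≤ (1/2) * ‖a - b‖ + (1/2) * ‖N a - N b‖ := by
          rw [norm_smul, norm_smul]; simp [abs_of_nonneg]
      _ ≤ ‖a - b‖ := by linarith [hN a b]
  have hTcont : Continuous T :=
    (LipschitzWith.of_dist_le_mul (by
      intro a b
      simpa [dist_eq_norm, NNReal.coe_one, one_mul] using hTne a b)
      (K := 1)).continuous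
  -- key decrease inequality
  have hdec : ∀ k, ‖u (k+1) - v‖^2 + (1/4) * ‖u k - N (u k)‖^2 ≤ ‖u k - v‖^2 := by
    intro k
    set a := u k - v with ha
    set b := N (u k) - v with hb
    have hb' : ‖b‖ ≤ ‖a‖ := by
      have := hN (u k) v
      rwa [hNv] at this
    have h1 : u (k+1) - v = (1/2:ℝ) • a + (1/2:ℝ) • b := by
      rw [hu, hT, ha, hb]; module
    have h2 : u k - N (u k) = a - b := by rw [ha, hb]; abel
    rw [h1, h2]
    have e1 : ‖(1/2:ℝ) • a + (1/2:ℝ) • b‖^2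
        = (1/4)*‖a‖^2 + (1/2)*⟪a,b⟫ + (1/4)*‖b‖^2 := by
      rw [@norm_add_sq_real, real_inner_smul_left, real_inner_smul_right,
        norm_smul, norm_smul]
      simp only [Real.norm_eq_abs]
      rw [abs_of_nonneg (by norm_num : (0:ℝ) ≤ 1/2)]
      ring
    have e2 : ‖a - b‖^2 = ‖a‖^2 - 2*⟪a,b⟫ + ‖b‖^2 := by
      rw [@norm_sub_sq_real]
    rw [e1, e2]
    nlinarith [sq_nonneg ‖a‖, sq_nonneg ‖b‖, norm_nonneg a, norm_nonneg b,
      sq_le_sq' (by linarith [norm_nonneg b] : -‖a‖ ≤ ‖b‖) hb']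
  -- ‖u k - v‖² is antitone, so bounded
  have hanti : ∀ k, ‖u (k+1) - v‖ ≤ ‖u k - v‖ := by
    intro k
    have h := hdec k
    have h2 : ‖u (k+1) - v‖^2 ≤ ‖u k - v‖^2 := by nlinarith [sq_nonneg ‖u k - N (u k)‖]
    exact (pow_le_pow_iff_left₀ (norm_nonneg _) (norm_nonneg _) two_ne_zero).mp h2
  have hbnd : ∀ k, ‖u k - v‖ ≤ ‖u 0 - v‖ := by
    intro k
    induction k with
    | zero => exact le_refl _
    | succ n ih => exact (hanti n).trans ih
  have hsum : ∀ K : ℕ, ∑ k ∈ Finset.range K, (1/4 : ℝ) * ‖u k - N (u k)‖^2 ≤ ‖u 0 - v‖^2 := by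
    intro K
    have tele : ∑ k ∈ Finset.range K, (1/4 : ℝ) * ‖u k - N (u k)‖^2
        ≤ ‖u 0 - v‖^2 - ‖u K - v‖^2 := by
      induction K with
      | zero => simp
      | succ n ih =>
        rw [Finset.sum_range_succ]
        have := hdec n
        linarith
    nlinarith [sq_nonneg ‖u K - v‖]
  have hsummable : Summable (fun k => (1/4 : ℝ) * ‖u k - N (u k)‖^2) :=
    summable_of_sum_range_le (fun k => by positivity) hsum
  have hd2 : Tendsto (fun k => (1/4 : ℝ) * ‖u k - N (u k)‖^2) atTop (nhds 0) :=
    hsummable.tendsto_atTop_zero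
  have hdist0 : Tendsto (fun k => ‖u k - N (u k)‖) atTop (nhds 0) := by
    have h4 : Tendsto (fun k => ‖u k - N (u k)‖^2) atTop (nhds 0) := by
      have := hd2.const_mul (4:ℝ)
      simpa using this
    have hc := (Real.continuous_sqrt.tendsto' 0 0 Real.sqrt_zero).comp h4
    have heq : ((fun x => Real.sqrt x) ∘ fun k => ‖u k - N (u k)‖ ^ 2)
        = fun k => ‖u k - N (u k)‖ := by
      funext k
      simp [Function.comp, Real.sqrt_sq (norm_nonneg _)]
    rwa [heq] at hc
  -- compactness: convergent subsequence
  have hmem : ∀ k, u k ∈ Metric.closedBall v (‖u 0 - v‖) := by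
    intro k
    rw [Metric.mem_closedBall, dist_eq_norm]
    exact hbnd k
  obtain ⟨w, -, φ, hφmono, hφlim⟩ :=
    (isCompact_closedBall v (‖u 0 - v‖)).tendsto_subseq hmem
  -- w is a fixed point
  have hTw : T w = w := by
    have h1 : Tendsto (fun j => u (φ j) - T (u (φ j))) atTop (nhds 0) := by
      rw [tendsto_zero_iff_norm_tendsto_zero]
      have hsub : Tendsto (fun j => ‖u (φ j) - N (u (φ j))‖) atTop (nhds 0) :=
        hdist0.comp hφmono.tendsto_atTop
      have heq : ∀ j, ‖u (φ j) - T (u (φ j))‖ = (1/2) * ‖u (φ j) - N (u (φ j))‖ := by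
        intro j
        have : u (φ j) - T (u (φ j)) = (1/2:ℝ) • (u (φ j) - N (u (φ j))) := by
          rw [hT]; module
        rw [this, norm_smul]
        simp
      simp only [heq]
      have := hsub.const_mul (1/2:ℝ)
      simpa using this
    have h2 : Tendsto (fun j => T (u (φ j))) atTop (nhds (T w)) :=
      (hTcont.tendsto w).comp hφlim
    have h3 : Tendsto (fun j => u (φ j)) atTop (nhds (0 + T w)) := by
      have := h1.add h2
      simpa using this
    rw [zero_add] at h3
    exact (tendsto_nhds_unique h3 hφlim)
  -- Fejér: ‖u k - w‖ antitone, subsequence → 0, so whole sequence → w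
  have hantiw : ∀ k l, k ≤ l → ‖u l - w‖ ≤ ‖u k - w‖ := by
    have step : ∀ k, ‖u (k+1) - w‖ ≤ ‖u k - w‖ := by
      intro k
      rw [hu]
      calc ‖T (u k) - w‖ = ‖T (u k) - T w‖ := by rw [hTw]
        _ ≤ ‖u k - w‖ := hTne _ _
    intro k l hkl
    induction l, hkl using Nat.le_induction with
    | base => exact le_refl _
    | succ n hn ih => exact (step n).trans ih
  have hnw0 : Tendsto (fun j => ‖u (φ j) - w‖) atTop (nhds 0) := by
    rw [← tendsto_zero_iff_norm_tendsto_zero]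
    have := hφlim.sub (tendsto_const_nhds (x := w))
    simpa using this
  have : Tendsto (fun k => ‖u k - w‖) atTop (nhds 0) := by
    rw [Metric.tendsto_atTop]
    intro ε hε
    rw [Metric.tendsto_atTop] at hnw0
    obtain ⟨J, hJ⟩ := hnw0 ε hε
    refine ⟨φ J, fun n hn => ?_⟩
    have h1 := hJ J (le_refl J)
    rw [Real.dist_eq, sub_zero] at h1 ⊢
    have h2 : ‖u n - w‖ ≤ ‖u (φ J) - w‖ := hantiw _ _ hn
    rw [abs_of_nonneg (norm_nonneg _)] at h1 ⊢
    linarith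
  refine ⟨w, hTw, ?_⟩
  rw [tendsto_iff_norm_sub_tendsto_zero]
  exact this

end KMAux

/-- Fixed-point convergence of PnP-ADMM: for convex f, a θ-averaged denoiser D
(θ ∈ (0,1/2]) and ρ > 0, if T = ½I + ½(2Prox_{ρ⁻¹f} − I)∘(2D − I) has a fixed
point, then the PnP-ADMM iterates converge:
x_k → Prox_{ρ⁻¹f}((2D−I)u*), y_k → D(u*), z_k → (I−D)(u*) for some fixed
point u* of T. -/
theorem stmt11 {H : Type*} [NormedAddCommGroup H] [InnerProductSpace ℝ H]
    [FiniteDimensional ℝ H]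
    (f : H → ℝ) (hconv : ConvexOn ℝ Set.univ f) (ρ : ℝ) (hρ : 0 < ρ)
    (P : H → H)
    (hP : ∀ x y : H, ρ⁻¹ * f (P x) + ‖P x - x‖ ^ 2 / 2
        ≤ ρ⁻¹ * f y + ‖y - x‖ ^ 2 / 2)
    (D : H → H) (θ : ℝ) (hθ₁ : 0 < θ) (hθ₂ : θ ≤ 1/2)
    (S : H → H) (hS : ∀ x y, ‖S x - S y‖ ≤ ‖x - y‖)
    (hD : ∀ x, D x = (1 - θ) • x + θ • S x)
    (T : H → H)
    (hT : ∀ v, T v = (1/2 : ℝ) • v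
        + (1/2 : ℝ) • ((2 : ℝ) • P ((2 : ℝ) • D v - v) - ((2 : ℝ) • D v - v)))
    (hfix : ∃ v, T v = v)
    (x y z : ℕ → H)
    (hx : ∀ k, x (k+1) = P (y k - z k))
    (hy : ∀ k, y (k+1) = D (x (k+1) + z k))
    (hz : ∀ k, z (k+1) = z k + x (k+1) - y (k+1)) :
    ∃ ustar : H, T ustar = ustar ∧
      Filter.Tendsto x Filter.atTop (nhds (P ((2 : ℝ) • D ustar - ustar))) ∧
      Filter.Tendsto y Filter.atTop (nhds (D ustar)) ∧
      Filter.Tendsto z Filter.atTop (nhds (ustar - D ustar)) := by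
  -- nonexpansiveness facts
  have hvar := prox_var f hconv ρ hρ P hP
  have hfirm := firm_of_var f ρ P hvar
  have hPne := P_nonexp P hfirm
  have hRP := refl_nonexp P hfirm
  -- reflection of D is nonexpansive
  have hRD : ∀ a b : H, ‖((2:ℝ) • D a - a) - ((2:ℝ) • D b - b)‖ ≤ ‖a - b‖ := by
    intro a b
    have hrw : ((2:ℝ) • D a - a) - ((2:ℝ) • D b - b)
        = (1 - 2*θ) • (a - b) + (2*θ) • (S a - S b) := by
      rw [hD, hD]; module
    rw [hrw]
    calc ‖(1 - 2*θ) • (a - b) + (2*θ) • (S a - S b)‖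
        ≤ ‖(1 - 2*θ) • (a - b)‖ + ‖(2*θ) • (S a - S b)‖ := norm_add_le _ _
      _ = (1 - 2*θ) * ‖a - b‖ + (2*θ) * ‖S a - S b‖ := by
          rw [norm_smul, norm_smul, Real.norm_eq_abs, Real.norm_eq_abs,
            abs_of_nonneg (by linarith), abs_of_nonneg (by linarith)]
      _ ≤ (1 - 2*θ) * ‖a - b‖ + (2*θ) * ‖a - b‖ := by
          have := hS a b
          nlinarith
      _ = ‖a - b‖ := by ring
  -- the nonexpansive part  N
  set N : H → H := fun v => (2:ℝ) • P ((2:ℝ) • D v - v) - ((2:ℝ) • D v - v) with hN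
  have hNne : ∀ a b : H, ‖N a - N b‖ ≤ ‖a - b‖ := fun a b =>
    (hRP ((2:ℝ) • D a - a) ((2:ℝ) • D b - b)).trans (hRD a b)
  have hT' : ∀ w, T w = (1/2:ℝ) • w + (1/2:ℝ) • N w := hT
  obtain ⟨v, hv⟩ := hfix
  -- reduction: u k = x (k+1) + z k iterates T
  set u : ℕ → H := fun k => x (k+1) + z k with hudef
  have hyD : ∀ k, y (k+1) = D (u k) := fun k => hy k
  have hzu : ∀ k, z (k+1) = u k - D (u k) := by
    intro k
    rw [hz, ← hyD]
    simp only [hudef]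
    rw [hyD]
    abel
  have hxu : ∀ k, x (k+2) = P ((2:ℝ) • D (u k) - u k) := by
    intro k
    rw [hx (k+1), hyD, hzu]
    congr 1
    module
  have hu : ∀ k, u (k+1) = T (u k) := by
    intro k
    show x (k+2) + z (k+1) = T (u k)
    rw [hxu, hzu, hT']
    simp only [hN]
    module
  obtain ⟨w, hTw, hulim⟩ := km N hNne T hT' v hv u hu
  -- continuity facts
  have hDne : ∀ a b : H, ‖D a - D b‖ ≤ ‖a - b‖ := by
    intro a b
    have hrw : D a - D b = (1 - θ) • (a - b) + θ • (S a - S b) := by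
      rw [hD, hD]; module
    rw [hrw]
    calc ‖(1 - θ) • (a - b) + θ • (S a - S b)‖
        ≤ ‖(1 - θ) • (a - b)‖ + ‖θ • (S a - S b)‖ := norm_add_le _ _
      _ = (1 - θ) * ‖a - b‖ + θ * ‖S a - S b‖ := by
          rw [norm_smul, norm_smul, Real.norm_eq_abs, Real.norm_eq_abs,
            abs_of_nonneg (by linarith), abs_of_nonneg (by linarith)]
      _ ≤ (1 - θ) * ‖a - b‖ + θ * ‖a - b‖ := by
          have := hS a b
          nlinarith
      _ = ‖a - b‖ := by ring
  have hDcont : Continuous D :=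
    (LipschitzWith.of_dist_le_mul (K := 1) (by
      intro a b; simpa [dist_eq_norm] using hDne a b)).continuous
  have hPcont : Continuous P :=
    (LipschitzWith.of_dist_le_mul (K := 1) (by
      intro a b; simpa [dist_eq_norm] using hPne a b)).continuous
  refine ⟨w, hTw, ?_, ?_, ?_⟩
  · -- x tends to P (2 D w - w)
    have hcomp : Tendsto (fun k => P ((2:ℝ) • D (u k) - u k)) atTop
        (nhds (P ((2:ℝ) • D w - w))) := by
      apply (hPcont.tendsto _).comp
      exact ((hDcont.tendsto w).comp hulim).const_smul (2:ℝ) |>.sub hulim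
    have : Tendsto (fun k => x (k + 2)) atTop (nhds (P ((2:ℝ) • D w - w))) := by
      have heq : (fun k => x (k + 2)) = fun k => P ((2:ℝ) • D (u k) - u k) := by
        funext k; exact hxu k
      rw [heq]; exact hcomp
    exact (tendsto_add_atTop_iff_nat 2).mp this
  · have hcomp : Tendsto (fun k => D (u k)) atTop (nhds (D w)) :=
      (hDcont.tendsto w).comp hulim
    have : Tendsto (fun k => y (k + 1)) atTop (nhds (D w)) := by
      have heq : (fun k => y (k + 1)) = fun k => D (u k) := by
        funext k; exact hyD k
      rw [heq]; exact hcomp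
    exact (tendsto_add_atTop_iff_nat 1).mp this
  · have hcomp : Tendsto (fun k => u k - D (u k)) atTop (nhds (w - D w)) :=
      hulim.sub ((hDcont.tendsto w).comp hulim)
    have : Tendsto (fun k => z (k + 1)) atTop (nhds (w - D w)) := by
      have heq : (fun k => z (k + 1)) = fun k => u k - D (u k) := by
        funext k; exact hzu k
      rw [heq]; exact hcomp
    exact (tendsto_add_atTop_iff_nat 1).mp this
end

section
/- Fix ρ > 0 and initializations y₀, z₀, and let (x_k, y_k, z_k)_{k≥1} be the PnP-ADMM iterates x_{k+1} = Prox_{ρ⁻¹f}(y_k − z_k), y_{k+1} = D(x_{k+1} + z_k), z_{k+1} = z_k + x_{k+1} − y_{k+1}. Define u₁ = y₁ + z₁ and u_k = T(u_{k−1}) for k ≥ 2, where T = ½I + ½(2Prox_{ρ⁻¹f} − I)∘(2D − I). Then for all k ≥ 1: y_k = D(u_k), z_k = (I − D)(u_k), and x_{k+1} = Prox_{ρ⁻¹f}((2D − I)(u_k)). -/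
/-- Douglas–Rachford reformulation of PnP-ADMM: with u₁ = y₁ + z₁ and
u_{k+1} = T(u_k) for T = ½I + ½(2Prox_{ρ⁻¹f} − I)∘(2D − I), the ADMM iterates
satisfy y_k = D(u_k), z_k = (I − D)(u_k), x_{k+1} = Prox_{ρ⁻¹f}((2D − I)(u_k)). -/
theorem stmt12 {H : Type*} [NormedAddCommGroup H] [InnerProductSpace ℝ H]
    (f : H → ℝ) (hconv : ConvexOn ℝ Set.univ f) (ρ : ℝ) (hρ : 0 < ρ)
    (P : H → H)
    (hP : ∀ x y : H, ρ⁻¹ * f (P x) + ‖P x - x‖ ^ 2 / 2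
        ≤ ρ⁻¹ * f y + ‖y - x‖ ^ 2 / 2)
    (D : H → H) (T : H → H)
    (hT : ∀ v, T v = (1/2 : ℝ) • v
        + (1/2 : ℝ) • ((2 : ℝ) • P ((2 : ℝ) • D v - v) - ((2 : ℝ) • D v - v)))
    (x y z u : ℕ → H)
    (hx : ∀ k, x (k+1) = P (y k - z k))
    (hy : ∀ k, y (k+1) = D (x (k+1) + z k))
    (hz : ∀ k, z (k+1) = z k + x (k+1) - y (k+1))
    (hu1 : u 1 = y 1 + z 1)
    (hu : ∀ k ≥ 1, u (k+1) = T (u k)) :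
    ∀ k ≥ 1, y k = D (u k) ∧ z k = u k - D (u k)
      ∧ x (k+1) = P ((2 : ℝ) • D (u k) - u k) := by
  intro k hk
  induction k, hk using Nat.le_induction with
  | base =>
    have h1 : u 1 = x 1 + z 0 := by
      rw [hu1, hz 0]; abel
    have hy1 : y 1 = D (u 1) := by rw [hy 0, h1]
    have hz1 : z 1 = u 1 - D (u 1) := by
      rw [← hy1, hu1]; abel
    refine ⟨hy1, hz1, ?_⟩
    rw [hx 1, hy1, hz1]
    congr 1
    rw [two_smul]; abel
  | succ k hk ih =>
    obtain ⟨ihy, ihz, ihx⟩ := ih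
    have hkey : u (k+1) = x (k+1) + z k := by
      rw [hu k hk, hT, ← ihx, ihz]
      module
    have hy' : y (k+1) = D (u (k+1)) := by rw [hy k, hkey]
    have hz' : z (k+1) = u (k+1) - D (u (k+1)) := by
      rw [hz k, ← hy', hkey, ihz]; abel
    refine ⟨hy', hz', ?_⟩
    rw [hx (k+1), hy', hz']
    congr 1
    rw [two_smul]; abel
end

section
/- Let K ∈ R^{n×n} be symmetric positive definite, D a diagonal matrix with positive diagonal entries, and let W = D⁻¹K. Equip R^n with the inner product ⟨x, y⟩ = xᵀDy. Then W is self-adjoint w.r.t. ⟨·,·⟩, and the map x ↦ Wx equals the proximal operator on (R^n, ⟨·,·⟩) of the convex quadratic g(x) = ½ xᵀ D(K⁻¹D − I) x, provided the eigenvalues of W lie in (0,1] (e.g., when D_{ii} = Σ_j K_{ij} and K is entrywise nonnegative). -/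
open Matrix

/-- For K symmetric positive definite, D diagonal with positive entries,
W = D⁻¹K, and the inner product ⟨x, y⟩ = xᵀDy: W is self-adjoint, and (if the
eigenvalues of W lie in (0,1]) the map x ↦ Wx is the proximal operator of the
convex quadratic g(x) = ½ xᵀ D(K⁻¹D − I) x. -/
theorem stmt17 {n : ℕ} (K : Matrix (Fin n) (Fin n) ℝ) (hK : K.PosDef)
    (d : Fin n → ℝ) (hd : ∀ i, 0 < d i)
    (W : Matrix (Fin n) (Fin n) ℝ)
    (hW : W = (Matrix.diagonal d)⁻¹ * K)
    (heig : ∀ μ ∈ spectrum ℝ W, μ ∈ Set.Ioc (0 : ℝ) 1) :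
    let Dm := Matrix.diagonal d
    let ip : (Fin n → ℝ) → (Fin n → ℝ) → ℝ := fun x y => x ⬝ᵥ Dm.mulVec y
    let g : (Fin n → ℝ) → ℝ :=
      fun x => (1/2) * (x ⬝ᵥ (Dm * (K⁻¹ * Dm - 1)).mulVec x)
    (∀ x y, ip (W.mulVec x) y = ip x (W.mulVec y)) ∧
    (∀ x y : Fin n → ℝ,
      g (W.mulVec x) + ip (W.mulVec x - x) (W.mulVec x - x) / 2
        ≤ g y + ip (y - x) (y - x) / 2) ∧
    (∀ x p : Fin n → ℝ,
      (∀ y, g p + ip (p - x) (p - x) / 2 ≤ g y + ip (y - x) (y - x) / 2) →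
        p = W.mulVec x) := by
  intro Dm ip g
  have hDpd : Dm.PosDef := Matrix.PosDef.diagonal hd
  have hDdet : IsUnit Dm.det := (Matrix.isUnit_iff_isUnit_det _).1 hDpd.isUnit
  have hKdet : IsUnit K.det := (Matrix.isUnit_iff_isUnit_det _).1 hK.isUnit
  have hDD : Dm * Dm⁻¹ = 1 := Matrix.mul_nonsing_inv _ hDdet
  have hKK : K⁻¹ * K = 1 := Matrix.nonsing_inv_mul _ hKdet
  have hDW : Dm * W = K := by rw [hW, ← Matrix.mul_assoc, hDD, Matrix.one_mul]
  set M : Matrix (Fin n) (Fin n) ℝ := Dm * (K⁻¹ * Dm) with hM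
  have hKT : Kᵀ = K := by
    have := hK.1
    simpa [Matrix.IsHermitian, Matrix.conjTranspose_eq_transpose_of_trivial] using this
  have hDT : Dmᵀ = Dm := Matrix.diagonal_transpose d
  have hKiT : (K⁻¹)ᵀ = K⁻¹ := by rw [Matrix.transpose_nonsing_inv, hKT]
  have hMT : Mᵀ = M := by
    rw [hM, Matrix.transpose_mul, Matrix.transpose_mul, hDT, hKiT, Matrix.mul_assoc]
  have h1 : Dm * ((Matrix.diagonal d)⁻¹ * K) = K := by
    rw [← Matrix.mul_assoc]
    rw [show Dm * (Matrix.diagonal d)⁻¹ = Dm * Dm⁻¹ from rfl, hDD, Matrix.one_mul]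
  have hMW : M * W = Dm := by
    rw [hM, hW, Matrix.mul_assoc, Matrix.mul_assoc K⁻¹ Dm, h1, hKK, Matrix.mul_one]
  have hWM : Wᵀ * M = Dm := by
    rw [← hMT, ← Matrix.transpose_mul, hMW, hDT]
  have haux : ∀ (A : Matrix (Fin n) (Fin n) ℝ) (u v : Fin n → ℝ),
      (A.mulVec u) ⬝ᵥ v = u ⬝ᵥ (Aᵀ.mulVec v) := by
    intro A u v
    rw [Matrix.dotProduct_mulVec, Matrix.vecMul_transpose]
  have c1 : ∀ x y : Fin n → ℝ, y ⬝ᵥ M.mulVec (W.mulVec x) = y ⬝ᵥ Dm.mulVec x := by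
    intro x y; rw [Matrix.mulVec_mulVec, hMW]
  have c2 : ∀ x y : Fin n → ℝ, (W.mulVec x) ⬝ᵥ M.mulVec y = x ⬝ᵥ Dm.mulVec y := by
    intro x y
    rw [haux W x (M.mulVec y), Matrix.mulVec_mulVec, hWM]
  -- nonnegativity of the quadratic form of M
  have hKi : (K⁻¹).PosDef := hK.inv
  have hqform : ∀ v : Fin n → ℝ,
      v ⬝ᵥ M.mulVec v = (Dm.mulVec v) ⬝ᵥ (K⁻¹).mulVec (Dm.mulVec v) := by
    intro v
    rw [haux Dm v ((K⁻¹).mulVec (Dm.mulVec v)), hDT, Matrix.mulVec_mulVec,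
      Matrix.mulVec_mulVec, hM, Matrix.mul_assoc]
  have hq : ∀ v : Fin n → ℝ, 0 ≤ v ⬝ᵥ M.mulVec v := by
    intro v
    rw [hqform v]
    have := hKi.posSemidef.dotProduct_mulVec_nonneg (Dm.mulVec v)
    simpa using this
  have hqpos : ∀ v : Fin n → ℝ, v ≠ 0 → 0 < v ⬝ᵥ M.mulVec v := by
    intro v hv
    rw [hqform v]
    have hDv : Dm.mulVec v ≠ 0 := by
      intro h
      apply hv
      have hinj : Function.Injective Dm.mulVec :=
        (Matrix.mulVec_injective_iff_isUnit).2 hDpd.isUnit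
      have : Dm.mulVec v = Dm.mulVec 0 := by simpa [Matrix.mulVec_zero] using h
      exact hinj this
    have := hKi.dotProduct_mulVec_pos hDv
    simpa using this
  -- key identity
  have key : ∀ x y : Fin n → ℝ,
      g y + ip (y - x) (y - x) / 2
        = (y - W.mulVec x) ⬝ᵥ M.mulVec (y - W.mulVec x) / 2
          + (x ⬝ᵥ Dm.mulVec x - x ⬝ᵥ K.mulVec x) / 2 := by
    intro x y
    have hg : Dm * (K⁻¹ * Dm - 1) = M - Dm := by rw [Matrix.mul_sub, Matrix.mul_one, hM]
    show (1/2) * (y ⬝ᵥ (Dm * (K⁻¹ * Dm - 1)).mulVec y)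
        + (y - x) ⬝ᵥ Dm.mulVec (y - x) / 2 = _
    rw [hg]
    simp only [Matrix.mulVec_sub, Matrix.sub_mulVec, dotProduct_sub,
      sub_dotProduct]
    rw [c1 x y, c2 x y, c2 x (W.mulVec x), Matrix.mulVec_mulVec, hDW]
    ring
  refine ⟨?_, ?_, ?_⟩
  · -- self-adjointness
    intro x y
    show (W.mulVec x) ⬝ᵥ Dm.mulVec y = x ⬝ᵥ Dm.mulVec (W.mulVec y)
    rw [haux W x (Dm.mulVec y), Matrix.mulVec_mulVec, Matrix.mulVec_mulVec]
    have : Wᵀ * Dm = K := by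
      rw [← hDT, ← Matrix.transpose_mul, hDW, hKT]
    rw [this, hDW]
  · intro x y
    rw [key x y, key x (W.mulVec x)]
    have h0 : (W.mulVec x - W.mulVec x) ⬝ᵥ M.mulVec (W.mulVec x - W.mulVec x) = 0 := by
      simp
    rw [h0]
    have := hq (y - W.mulVec x)
    linarith
  · intro x p hp
    have h := hp (W.mulVec x)
    rw [key x p, key x (W.mulVec x)] at h
    have h0 : (W.mulVec x - W.mulVec x) ⬝ᵥ M.mulVec (W.mulVec x - W.mulVec x) = 0 := by
      simp
    rw [h0] at h
    by_contra hne
    have hsub : p - W.mulVec x ≠ 0 := sub_ne_zero.2 hne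
    have := hqpos (p - W.mulVec x) hsub
    linarith
end

section
/- Let x₁, …, x_N be distinct points in R^d and c₁, …, c_N real numbers, not all zero. Then the function h : R^d → C defined by h(ω) = Σ_k c_k exp(i⟨ω, x_k⟩) is nonzero for almost every ω ∈ R^d (w.r.t. Lebesgue measure). -/
open MeasureTheory

/-- The character `t ↦ exp(i a t)` on `ℝ` as a monoid hom on `Multiplicative ℝ`. -/
noncomputable def stmt19Ch (a : ℝ) : Multiplicative ℝ →* ℂ where
  toFun t := Complex.exp (Complex.I * ((a * t.toAdd : ℝ) : ℂ))
  map_one' := by simp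
  map_mul' s t := by
    simp only [toAdd_mul, ← Complex.exp_add]
    push_cast
    ring_nf

lemma stmt19Ch_inj : Function.Injective stmt19Ch := by
  intro p q h
  by_contra hpq
  have hpq' : p - q ≠ 0 := sub_ne_zero.mpr hpq
  set τ : ℝ := Real.pi / (p - q) with hτ
  have ht := DFunLike.congr_fun h (Multiplicative.ofAdd τ)
  simp only [stmt19Ch, MonoidHom.coe_mk, OneHom.coe_mk, toAdd_ofAdd] at ht
  rw [Complex.exp_eq_exp_iff_exists_int] at ht
  obtain ⟨n, hn⟩ := ht
  have h2 : ((p * τ : ℝ) : ℂ) = ((q * τ : ℝ) : ℂ) + n * (2 * Real.pi) := by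
    apply mul_left_cancel₀ Complex.I_ne_zero
    rw [hn]; push_cast; ring
  have hr : (p * τ : ℝ) = q * τ + n * (2 * Real.pi) := by exact_mod_cast h2
  have hπ : (p - q) * τ = Real.pi := by
    rw [hτ]; field_simp
  have hthis : Real.pi = n * (2 * Real.pi) := by nlinarith [hr, hπ]
  have h0 : (1 - 2 * (n : ℝ)) * Real.pi = 0 := by linarith
  rcases mul_eq_zero.mp h0 with h1 | h1
  · have : (1 : ℤ) = 2 * n := by
      have : (1 : ℝ) = 2 * n := by linarith
      exact_mod_cast this
    omega
  · exact Real.pi_ne_zero h1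

lemma stmt19Ch_li : LinearIndependent ℂ (fun a : ℝ => ⇑(stmt19Ch a)) :=
  (linearIndependent_monoidHom (Multiplicative ℝ) ℂ).comp stmt19Ch stmt19Ch_inj

/-- 1D case: a nontrivial exponential polynomial on `ℝ` has null zero set. -/
lemma stmt19_one_dim {N : ℕ} (a : Fin N → ℝ) (ha : Function.Injective a)
    (b : Fin N → ℂ) (hb : b ≠ 0) :
    volume {t : ℝ | ∑ k, b k * Complex.exp (Complex.I * ((a k * t : ℝ) : ℂ)) = 0} = 0 := by
  set f : ℝ → ℂ := fun t => ∑ k, b k * Complex.exp (Complex.I * ((a k * t : ℝ) : ℂ)) with hf_def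
  have hf : AnalyticOnNhd ℝ f Set.univ := by
    intro t _
    apply Finset.analyticAt_fun_sum
    intro k _
    exact analyticAt_const.mul ((analyticAt_cexp.restrictScalars).comp
      (analyticAt_const.mul ((Complex.ofRealCLM.analyticAt _).comp
        (analyticAt_const.mul analyticAt_id))))
  have hne : ¬ Set.EqOn f 0 Set.univ := by
    intro hEq
    apply hb
    funext k
    refine Fintype.linearIndependent_iff.mp (stmt19Ch_li.comp a ha) b ?_ k
    funext u
    have := hEq (Set.mem_univ u.toAdd)
    simpa [stmt19Ch, Finset.sum_apply, Pi.smul_apply, smul_eq_mul, hf_def] using this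
  rcases hf.eqOn_zero_or_eventually_ne_zero_of_preconnected isPreconnected_univ with h | h
  · exact absurd h hne
  · set Z : Set ℝ := {t | f t = 0} with hZ_def
    have key : ∀ x ∈ Z, {x} ∈ nhdsWithin x Z := by
      intro x _
      have hd := (mem_codiscreteWithin.mp h) x (Set.mem_univ x)
      rw [Filter.disjoint_principal_right] at hd
      have hd' : Zᶜ ∈ nhdsWithin x {x}ᶜ := by
        refine Filter.mem_of_superset hd ?_
        intro y hy
        simp only [Set.mem_compl_iff, Set.mem_diff, Set.mem_univ, true_and,
          Set.mem_setOf_eq, not_not] at hy ⊢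
        simpa [hZ_def] using hy
      rw [mem_nhdsWithin] at hd'
      obtain ⟨U, hUo, hxU, hUsub⟩ := hd'
      rw [mem_nhdsWithin]
      refine ⟨U, hUo, hxU, ?_⟩
      intro y ⟨hyU, hyZ⟩
      by_contra hyx
      exact (hUsub ⟨hyU, hyx⟩) hyZ
    obtain ⟨t, hts, htc, hcover⟩ :=
      TopologicalSpace.countable_cover_nhdsWithin (f := fun x : ℝ => ({x} : Set ℝ)) key
    have hZc : Z.Countable := by
      refine Set.Countable.mono ?_ htc
      intro z hz
      simpa using hcover hz
    exact hZc.measure_zero _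

/-- A nontrivial finite linear combination of distinct complex exponentials
ω ↦ Σ_k c_k exp(i⟨ω, x_k⟩) is nonzero for almost every ω. -/
theorem stmt19 {d N : ℕ} (x : Fin N → EuclideanSpace ℝ (Fin d))
    (hx : Function.Injective x)
    (c : Fin N → ℝ) (hc : c ≠ 0) :
    ∀ᵐ ω : EuclideanSpace ℝ (Fin d) ∂volume,
      (∑ k, (c k : ℂ) * Complex.exp (Complex.I * ((inner ℝ ω (x k) : ℝ) : ℂ))) ≠ 0 := by
  -- Step 1: find a direction `v` separating the `x k`.
  obtain ⟨v, hv⟩ : ∃ v : EuclideanSpace ℝ (Fin d),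
      Function.Injective fun k => (inner ℝ v (x k) : ℝ) := by
    by_contra hno
    push_neg at hno
    have hsub : (Set.univ : Set (EuclideanSpace ℝ (Fin d))) ⊆
        ⋃ (p : Fin N × Fin N) (_ : p.1 ≠ p.2),
          {v : EuclideanSpace ℝ (Fin d) | (inner ℝ v (x p.1 - x p.2) : ℝ) = 0} := by
      intro v _
      obtain ⟨k, j, hkj, hne⟩ := Function.not_injective_iff.mp (hno v)
      refine Set.mem_iUnion.mpr ⟨(k, j), Set.mem_iUnion.mpr ⟨hne, ?_⟩⟩
      simp only [Set.mem_setOf_eq, inner_sub_right]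
      rw [hkj]; ring
    have hz : volume (⋃ (p : Fin N × Fin N) (_ : p.1 ≠ p.2),
        {v : EuclideanSpace ℝ (Fin d) | (inner ℝ v (x p.1 - x p.2) : ℝ) = 0}) = 0 := by
      refine measure_iUnion_null fun p => measure_iUnion_null fun hp => ?_
      have hzz : x p.1 - x p.2 ≠ 0 := sub_ne_zero.mpr fun h' => hp (hx h')
      have hset : {v : EuclideanSpace ℝ (Fin d) | (inner ℝ v (x p.1 - x p.2) : ℝ) = 0} =
          (LinearMap.ker (innerSL ℝ (x p.1 - x p.2) : EuclideanSpace ℝ (Fin d) →ₗ[ℝ] ℝ) : Set (EuclideanSpace ℝ (Fin d))) := by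
        ext w
        simp only [Set.mem_setOf_eq, SetLike.mem_coe, LinearMap.mem_ker,
          ContinuousLinearMap.coe_coe, innerSL_apply_apply]
        rw [real_inner_comm]
      rw [hset]
      refine Measure.addHaar_submodule volume _ ?_
      intro htop
      have : x p.1 - x p.2 ∈ LinearMap.ker (innerSL ℝ (x p.1 - x p.2) : EuclideanSpace ℝ (Fin d) →ₗ[ℝ] ℝ) := by
        rw [htop]; trivial
      simp only [LinearMap.mem_ker, ContinuousLinearMap.coe_coe, innerSL_apply_apply] at this
      exact hzz (inner_self_eq_zero.mp this)
    have : volume (Set.univ : Set (EuclideanSpace ℝ (Fin d))) = 0 :=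
      measure_mono_null hsub hz
    exact (isOpen_univ.measure_ne_zero volume Set.univ_nonempty) this
  -- Step 2: Fubini along direction v.
  set h : EuclideanSpace ℝ (Fin d) → ℂ :=
    fun ω => ∑ k, (c k : ℂ) * Complex.exp (Complex.I * ((inner ℝ ω (x k) : ℝ) : ℂ)) with hh_def
  have hcont : Continuous h := by
    apply continuous_finset_sum
    intro k _
    exact continuous_const.mul (Complex.continuous_exp.comp
      (continuous_const.mul (Complex.continuous_ofReal.comp
        (continuous_id.inner continuous_const))))
  set Z : Set (EuclideanSpace ℝ (Fin d)) := {ω | h ω = 0} with hZ_def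
  have hZm : MeasurableSet Z := hcont.measurable (measurableSet_singleton 0)
  -- slices are null
  have hslice : ∀ ω : EuclideanSpace ℝ (Fin d), volume {t : ℝ | ω + t • v ∈ Z} = 0 := by
    intro ω
    obtain ⟨k₀, hk₀⟩ := Function.ne_iff.mp hc
    have hb : (fun k => (c k : ℂ) * Complex.exp (Complex.I * ((inner ℝ ω (x k) : ℝ) : ℂ))) ≠ 0 := by
      refine Function.ne_iff.mpr ⟨k₀, ?_⟩
      simp only [Pi.zero_apply]
      exact mul_ne_zero (by exact_mod_cast hk₀) (Complex.exp_ne_zero _)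
    have := stmt19_one_dim (fun k => (inner ℝ v (x k) : ℝ)) hv _ hb
    convert this using 2
    ext t
    simp only [Set.mem_setOf_eq, hZ_def, hh_def]
    have hterm : ∀ k : Fin N,
        (c k : ℂ) * Complex.exp (Complex.I * ((inner ℝ (ω + t • v) (x k) : ℝ) : ℂ)) =
        ((c k : ℂ) * Complex.exp (Complex.I * ((inner ℝ ω (x k) : ℝ) : ℂ))) *
          Complex.exp (Complex.I * (((inner ℝ v (x k) : ℝ) * t : ℝ) : ℂ)) := by
      intro k
      rw [inner_add_left, real_inner_smul_left]
      push_cast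
      rw [mul_add, Complex.exp_add]
      ring_nf
    rw [Finset.sum_congr rfl fun k _ => hterm k]
  -- Fubini
  have hmap : Measurable fun p : ℝ × EuclideanSpace ℝ (Fin d) => p.2 + p.1 • v :=
    (continuous_snd.add (continuous_fst.smul continuous_const)).measurable
  have hFmeas : Measurable (Function.uncurry fun (t : ℝ) (ω : EuclideanSpace ℝ (Fin d)) =>
      Z.indicator (fun _ => (1 : ENNReal)) (ω + t • v)) :=
    (measurable_const.indicator hZm).comp hmap
  have hswap := lintegral_lintegral_swap (μ := volume.restrict (Set.Icc (0:ℝ) 1))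
    (ν := (volume : Measure (EuclideanSpace ℝ (Fin d))))
    (f := fun (t : ℝ) (ω : EuclideanSpace ℝ (Fin d)) =>
      Z.indicator (fun _ => (1 : ENNReal)) (ω + t • v))
    hFmeas.aemeasurable
  have hA : (∫⁻ t in Set.Icc (0:ℝ) 1, ∫⁻ ω, Z.indicator (fun _ => (1 : ENNReal)) (ω + t • v)
      ∂(volume : Measure (EuclideanSpace ℝ (Fin d))) ∂volume) = volume Z := by
    have hin : ∀ t : ℝ, (∫⁻ ω, Z.indicator (fun _ => (1 : ENNReal)) (ω + t • v)
        ∂(volume : Measure (EuclideanSpace ℝ (Fin d)))) = volume Z := by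
      intro t
      have hpre : MeasurableSet ((fun ω : EuclideanSpace ℝ (Fin d) => ω + t • v) ⁻¹' Z) :=
        (measurable_add_const (t • v)) hZm
      calc (∫⁻ ω, Z.indicator (fun _ => (1 : ENNReal)) (ω + t • v)
            ∂(volume : Measure (EuclideanSpace ℝ (Fin d))))
          = ∫⁻ ω, ((fun ω : EuclideanSpace ℝ (Fin d) => ω + t • v) ⁻¹' Z).indicator
              (fun _ => (1 : ENNReal)) ω
            ∂(volume : Measure (EuclideanSpace ℝ (Fin d))) :=
            lintegral_congr fun ω => by
              classical rw [Set.indicator_apply, Set.indicator_apply, Set.mem_preimage]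
        _ = volume ((fun ω : EuclideanSpace ℝ (Fin d) => ω + t • v) ⁻¹' Z) :=
            lintegral_indicator_one hpre
        _ = volume Z := measure_preimage_add_right volume (t • v) Z
    rw [setLIntegral_congr_fun measurableSet_Icc (fun t _ => hin t)]
    simp [Real.volume_Icc]
  have hB : (∫⁻ ω, ∫⁻ t in Set.Icc (0:ℝ) 1, Z.indicator (fun _ => (1 : ENNReal)) (ω + t • v)
      ∂volume ∂(volume : Measure (EuclideanSpace ℝ (Fin d)))) = 0 := by
    have hin : ∀ ω : EuclideanSpace ℝ (Fin d), (∫⁻ t in Set.Icc (0:ℝ) 1,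
        Z.indicator (fun _ => (1 : ENNReal)) (ω + t • v) ∂volume) = 0 := by
      intro ω
      have hpre : MeasurableSet ((fun t : ℝ => ω + t • v) ⁻¹' Z) :=
        ((continuous_const.add (continuous_id.smul continuous_const)).measurable) hZm
      refine le_antisymm ?_ zero_le
      calc (∫⁻ t in Set.Icc (0:ℝ) 1, Z.indicator (fun _ => (1 : ENNReal)) (ω + t • v) ∂volume)
          ≤ ∫⁻ t, Z.indicator (fun _ => (1 : ENNReal)) (ω + t • v) ∂volume :=
            setLIntegral_le_lintegral _ _
        _ = ∫⁻ t, ((fun t : ℝ => ω + t • v) ⁻¹' Z).indicator (fun _ => (1 : ENNReal)) t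
            ∂volume :=
            lintegral_congr fun t => by
              classical rw [Set.indicator_apply, Set.indicator_apply, Set.mem_preimage]
        _ = volume ((fun t : ℝ => ω + t • v) ⁻¹' Z) := lintegral_indicator_one hpre
        _ = 0 := hslice ω
    simp [lintegral_congr hin]
  have hZ0 : volume Z = 0 := by
    rw [← hA, hswap, hB]
  rw [ae_iff]
  convert hZ0 using 2
  simp only [hZ_def, hh_def, not_not]
end
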